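/- arXiv:1409.5514 — 5 statements merged into one kernel-verified Lean document; each statement's English description precedes it below -/
import Mathlib

section
/- Comparison principle for the cell problem: Let H : ℝ^N × ℝ^N → ℝ be continuous and ℤ^N-periodic in its first variable, let P ∈ ℝ^N and a, b ∈ ℝ. If there exist a Lipschitz continuous ℤ^N-periodic viscosity subsolution u of the cell problem H(x, Du + P) = a on T^N and a Lipschitz continuous ℤ^N-periodic viscosity supersolution v of the cell problem H(x, Dv + P) = b on T^N, then a ≥ b. -/
open Set Filter MeasureTheory

noncomputable section

abbrev Euc (N : ℕ) := EuclideanSpace ℝ (Fin N)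

def intVec {N : ℕ} (z : Fin N → ℤ) : Euc N :=
  (EuclideanSpace.equiv (Fin N) ℝ).symm (fun i => (z i : ℝ))

def IsZPeriodic {N : ℕ} (u : Euc N → ℝ) : Prop :=
  ∀ (x : Euc N) (z : Fin N → ℤ), u (x + intVec z) = u x

def IsZPeriodicH {N : ℕ} (H : Euc N → Euc N → ℝ) : Prop :=
  ∀ (x p : Euc N) (z : Fin N → ℤ), H (x + intVec z) p = H x p

def superDiff {N : ℕ} (u : Euc N → ℝ) (x : Euc N) : Set (Euc N) :=
  { q | ∃ φ : Euc N → ℝ, ContDiff ℝ 1 φ ∧ IsZPeriodic φ ∧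
        (∀ y, u y - φ y ≤ u x - φ x) ∧ q = gradient φ x }

def subDiff {N : ℕ} (u : Euc N → ℝ) (x : Euc N) : Set (Euc N) :=
  { q | ∃ φ : Euc N → ℝ, ContDiff ℝ 1 φ ∧ IsZPeriodic φ ∧
        (∀ y, u x - φ x ≤ u y - φ y) ∧ q = gradient φ x }

def IsCellSubsolution {N : ℕ} (H : Euc N → Euc N → ℝ) (P : Euc N) (a : ℝ) (u : Euc N → ℝ) : Prop :=
  ∀ x, ∀ q ∈ superDiff u x, H x (q + P) ≤ a

def IsCellSupersolution {N : ℕ} (H : Euc N → Euc N → ℝ) (P : Euc N) (a : ℝ) (u : Euc N → ℝ) : Prop :=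
  ∀ x, ∀ q ∈ subDiff u x, a ≤ H x (q + P)

def IsCellSolution {N : ℕ} (H : Euc N → Euc N → ℝ) (P : Euc N) (u : Euc N → ℝ) (a : ℝ) : Prop :=
  (∃ K : NNReal, LipschitzWith K u) ∧ IsZPeriodic u ∧
    IsCellSubsolution H P a u ∧ IsCellSupersolution H P a u

def IsCoerciveH {N : ℕ} (H : Euc N → Euc N → ℝ) : Prop :=
  ∀ C : ℝ, ∃ r : ℝ, ∀ x p : Euc N, r ≤ ‖p‖ → C ≤ H x p

private def Gf {N : ℕ} (x : Euc N) : ℝ := ∑ i, (1 - Real.cos (2 * Real.pi * x i))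

private def Wf {N : ℕ} (z : Euc N) : Euc N :=
  (EuclideanSpace.equiv (Fin N) ℝ).symm (fun i => 2 * Real.pi * Real.sin (2 * Real.pi * z i))

private lemma Wf_apply {N : ℕ} (z : Euc N) (i : Fin N) :
    Wf z i = 2 * Real.pi * Real.sin (2 * Real.pi * z i) := rfl

private lemma intVec_apply {N : ℕ} (z : Fin N → ℤ) (i : Fin N) : intVec z i = (z i : ℝ) := rfl

private lemma cfun_hasDerivAt (t : ℝ) :
    HasDerivAt (fun s : ℝ => 1 - Real.cos (2 * Real.pi * s))
      (2 * Real.pi * Real.sin (2 * Real.pi * t)) t := by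
  have h1 : HasDerivAt (fun s : ℝ => 2 * Real.pi * s) (2 * Real.pi) t := by
    simpa using (hasDerivAt_id t).const_mul (2 * Real.pi)
  have h2 : HasDerivAt (fun s : ℝ => Real.cos (2 * Real.pi * s))
      (-Real.sin (2 * Real.pi * t) * (2 * Real.pi)) t :=
    (Real.hasDerivAt_cos _).comp t h1
  have h3 := (hasDerivAt_const t (1 : ℝ)).sub h2
  refine h3.congr_deriv ?_
  ring

private lemma cfun_contDiff : ContDiff ℝ 1 (fun s : ℝ => 1 - Real.cos (2 * Real.pi * s)) := by
  exact contDiff_const.sub (Real.contDiff_cos.comp (contDiff_const.mul contDiff_id))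

private lemma cfun_nonneg (t : ℝ) : 0 ≤ 1 - Real.cos (2 * Real.pi * t) := by
  have := Real.cos_le_one (2 * Real.pi * t); linarith

private lemma cfun_periodic (t : ℝ) (m : ℤ) :
    1 - Real.cos (2 * Real.pi * (t + m)) = 1 - Real.cos (2 * Real.pi * t) := by
  rw [show 2 * Real.pi * (t + m) = 2 * Real.pi * t + m * (2 * Real.pi) by push_cast; ring,
    Real.cos_add_int_mul_two_pi]

private lemma cfun_lower {t : ℝ} (ht : |t| ≤ 1 / 2) :
    8 * t ^ 2 ≤ 1 - Real.cos (2 * Real.pi * t) := by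
  have hpi := Real.pi_pos
  have h1 : Real.cos (2 * Real.pi * t) = Real.cos (Real.pi * t) ^ 2 - Real.sin (Real.pi * t) ^ 2 := by
    rw [show 2 * Real.pi * t = 2 * (Real.pi * t) by ring]
    exact Real.cos_two_mul' _
  have hpc := Real.sin_sq_add_cos_sq (Real.pi * t)
  have key : 2 * |t| ≤ Real.sin (Real.pi * |t|) := by
    have h2 : Real.pi * |t| ≤ Real.pi / 2 := by
      nlinarith [abs_nonneg t]
    have h3 := Real.mul_le_sin (x := Real.pi * |t|) (by positivity) h2
    calc 2 * |t| = 2 / Real.pi * (Real.pi * |t|) := by field_simp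
    _ ≤ _ := h3
  have hsq : 4 * t ^ 2 ≤ Real.sin (Real.pi * t) ^ 2 := by
    have h4 : Real.sin (Real.pi * |t|) ^ 2 = Real.sin (Real.pi * t) ^ 2 := by
      rcases abs_cases t with ⟨h, _⟩ | ⟨h, _⟩
      · rw [h]
      · rw [h, show Real.pi * -t = -(Real.pi * t) by ring, Real.sin_neg, neg_sq]
    have h5 : (2 * |t|) ^ 2 ≤ Real.sin (Real.pi * |t|) ^ 2 := by
      apply pow_le_pow_left₀ (by positivity) key
    rw [h4] at h5
    calc 4 * t ^ 2 = (2 * |t|) ^ 2 := by rw [mul_pow, sq_abs]; ring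
    _ ≤ _ := h5
  linarith [hsq]

private lemma Gf_nonneg {N : ℕ} (x : Euc N) : 0 ≤ Gf x :=
  Finset.sum_nonneg fun i _ => cfun_nonneg _

private lemma Gf_zero {N : ℕ} : Gf (0 : Euc N) = 0 := by
  apply Finset.sum_eq_zero
  intro i _
  have : (0 : Euc N) i = 0 := rfl
  rw [this]
  simp

private lemma Gf_periodic {N : ℕ} (x : Euc N) (m : Fin N → ℤ) : Gf (x + intVec m) = Gf x := by
  unfold Gf
  apply Finset.sum_congr rfl
  intro i _
  have : (x + intVec m) i = x i + (m i : ℝ) := rfl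
  rw [this, cfun_periodic]

private lemma contDiff_Gf {N : ℕ} : ContDiff ℝ 1 (Gf (N := N)) := by
  apply ContDiff.sum
  intro i _
  have hp : ContDiff ℝ 1 (fun x : Euc N => x i) := (EuclideanSpace.proj (𝕜 := ℝ) i).contDiff
  exact cfun_contDiff.comp hp

private lemma norm_sq_eq_sum {N : ℕ} (x : Euc N) : ‖x‖ ^ 2 = ∑ i, x i ^ 2 := by
  rw [EuclideanSpace.norm_eq, Real.sq_sqrt (by positivity)]
  congr 1
  ext i
  rw [Real.norm_eq_abs, sq_abs]

private lemma Gf_lower {N : ℕ} {z : Euc N} (hz : ∀ i, |z i| ≤ 1 / 2) :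
    8 * ‖z‖ ^ 2 ≤ Gf z := by
  rw [norm_sq_eq_sum, Finset.mul_sum]
  exact Finset.sum_le_sum fun i _ => cfun_lower (hz i)

private lemma norm_Wf_le {N : ℕ} (z : Euc N) : ‖Wf z‖ ≤ 4 * Real.pi ^ 2 * ‖z‖ := by
  have hpi := Real.pi_pos
  have h1 : ‖Wf z‖ ^ 2 ≤ (4 * Real.pi ^ 2 * ‖z‖) ^ 2 := by
    rw [norm_sq_eq_sum, show (4 * Real.pi ^ 2 * ‖z‖) ^ 2 = (4 * Real.pi ^ 2) ^ 2 * ‖z‖ ^ 2 by ring,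
      norm_sq_eq_sum, Finset.mul_sum]
    apply Finset.sum_le_sum
    intro i _
    rw [Wf_apply]
    have hs : |Real.sin (2 * Real.pi * z i)| ≤ |2 * Real.pi * z i| := Real.abs_sin_le_abs
    have h2 : Real.sin (2 * Real.pi * z i) ^ 2 ≤ (2 * Real.pi * z i) ^ 2 := by
      rw [← sq_abs, ← sq_abs (2 * Real.pi * z i)]
      exact pow_le_pow_left₀ (abs_nonneg _) hs 2
    nlinarith [h2, Real.pi_pos]
  have h2 : (0:ℝ) ≤ 4 * Real.pi ^ 2 * ‖z‖ := by positivity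
  nlinarith [norm_nonneg (Wf z), h1]

private lemma norm_le_of_comp {N : ℕ} {x : Euc N} {r : ℝ} (hr : 0 ≤ r) (h : ∀ i, |x i| ≤ r) :
    ‖x‖ ≤ r * Real.sqrt N := by
  rw [EuclideanSpace.norm_eq]
  have hsum : ∑ i, ‖x i‖ ^ 2 ≤ (N : ℝ) * r ^ 2 := by
    calc ∑ i, ‖x i‖ ^ 2 ≤ ∑ _i : Fin N, r ^ 2 := by
          apply Finset.sum_le_sum
          intro i _
          rw [Real.norm_eq_abs]
          exact pow_le_pow_left₀ (abs_nonneg _) (h i) 2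
    _ = (N : ℝ) * r ^ 2 := by simp [mul_comm]
  calc Real.sqrt (∑ i, ‖x i‖ ^ 2) ≤ Real.sqrt ((N : ℝ) * r ^ 2) := Real.sqrt_le_sqrt hsum
  _ = r * Real.sqrt N := by
      rw [Real.sqrt_mul (by positivity), Real.sqrt_sq hr]; ring

private lemma hasGradientAt_Gf {N : ℕ} (z : Euc N) : HasGradientAt Gf (Wf z) z := by
  rw [hasGradientAt_iff_hasFDerivAt]
  have h : HasFDerivAt (Gf (N := N))
      (∑ i, (2 * Real.pi * Real.sin (2 * Real.pi * z i)) •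
        (EuclideanSpace.proj i : Euc N →L[ℝ] ℝ)) z := by
    apply HasFDerivAt.fun_sum (A := fun i (x : Euc N) => 1 - Real.cos (2 * Real.pi * x i))
    intro i _
    have hp : HasFDerivAt (fun x : Euc N => x i)
        (EuclideanSpace.proj (𝕜 := ℝ) i : Euc N →L[ℝ] ℝ) z :=
      (EuclideanSpace.proj (𝕜 := ℝ) i).hasFDerivAt
    exact ((cfun_hasDerivAt (z i)).comp_hasFDerivAt z hp :)
  refine h.congr_fderiv ?_
  apply ContinuousLinearMap.ext
  intro h'
  simp only [InnerProductSpace.toDual_apply_apply, ContinuousLinearMap.sum_apply,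
    ContinuousLinearMap.smul_apply, PiLp.inner_apply,
    RCLike.inner_apply, conj_trivial, smul_eq_mul]
  exact Finset.sum_congr rfl fun i _ => by rw [Wf_apply, mul_comm]; rfl

private lemma grad_phi {N : ℕ} (K : ℝ) (x0 y0 : Euc N) :
    gradient (fun x : Euc N => K * Gf (x - y0)) x0 = K • Wf (x0 - y0) := by
  apply HasGradientAt.gradient
  rw [hasGradientAt_iff_hasFDerivAt]
  have hG : HasFDerivAt Gf
      ((InnerProductSpace.toDual ℝ (Euc N)) (Wf (x0 - y0))) (x0 - y0) :=
    (hasGradientAt_Gf (x0 - y0)).hasFDerivAt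
  have hsub : HasFDerivAt (fun x : Euc N => x - y0) (ContinuousLinearMap.id ℝ (Euc N)) x0 :=
    (hasFDerivAt_id x0).sub_const y0
  have h1 : HasFDerivAt (fun x : Euc N => Gf (x - y0))
      ((InnerProductSpace.toDual ℝ (Euc N)) (Wf (x0 - y0))) x0 := by
    exact hG.comp x0 hsub
  have h2 := h1.const_mul K
  refine h2.congr_fderiv ?_
  apply ContinuousLinearMap.ext
  intro h'
  simp [InnerProductSpace.toDual_apply_apply, real_inner_smul_left]

private lemma grad_psi {N : ℕ} (K : ℝ) (x0 y0 : Euc N) :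
    gradient (fun y : Euc N => -(K * Gf (x0 - y))) y0 = K • Wf (x0 - y0) := by
  apply HasGradientAt.gradient
  rw [hasGradientAt_iff_hasFDerivAt]
  have hG : HasFDerivAt Gf
      ((InnerProductSpace.toDual ℝ (Euc N)) (Wf (x0 - y0))) (x0 - y0) :=
    (hasGradientAt_Gf (x0 - y0)).hasFDerivAt
  have hsub : HasFDerivAt (fun y : Euc N => x0 - y)
      (-(ContinuousLinearMap.id ℝ (Euc N))) y0 := by
    exact (hasFDerivAt_id y0).const_sub x0
  have h1 := hG.comp y0 hsub
  have h2 := (h1.const_mul K).neg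
  refine h2.congr_fderiv ?_
  apply ContinuousLinearMap.ext
  intro h'
  simp [InnerProductSpace.toDual_apply_apply, real_inner_smul_left, inner_neg_right]

private lemma intVec_neg {N : ℕ} (m : Fin N → ℤ) :
    intVec (fun i => -(m i)) = -intVec m := by
  ext i
  show ((-(m i) : ℤ) : ℝ) = -((m i : ℤ) : ℝ)
  push_cast
  ring

private lemma exists_good_max {N : ℕ} (F : Euc N → Euc N → ℝ)
    (hF : Continuous fun p : Euc N × Euc N => F p.1 p.2)
    (hper : ∀ x y zx zy, F (x + intVec zx) (y + intVec zy) = F x y) :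
    ∃ xh yh : Euc N, (∀ x y, F x y ≤ F xh yh) ∧ (∀ i, |xh i - yh i| ≤ 1 / 2) ∧
      (∀ i, |yh i| ≤ 1) := by
  set S : Set (Euc N) := {x | ∀ i, x i ∈ Set.Icc (0 : ℝ) 1} with hS
  have hScomp : IsCompact S := by
    have hSeq : S = (EuclideanSpace.equiv (Fin N) ℝ) ⁻¹'
        (Set.univ.pi fun _ => Set.Icc (0 : ℝ) 1) := by
      ext x
      simp only [hS, Set.mem_setOf_eq, Set.mem_preimage, Set.mem_pi, Set.mem_univ,
        forall_true_left]
      rfl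
    rw [hSeq]
    exact ((EuclideanSpace.equiv (Fin N) ℝ).toHomeomorph).isCompact_preimage.2
      (isCompact_univ_pi fun _ => isCompact_Icc)
  have hSne : S.Nonempty := ⟨0, fun i => by constructor <;> norm_num [show (0 : Euc N) i = 0 from rfl]⟩
  obtain ⟨p, hpS, hp⟩ := (hScomp.prod hScomp).exists_isMaxOn (hSne.prod hSne) hF.continuousOn
  have hmax : ∀ x y, F x y ≤ F p.1 p.2 := by
    intro x y
    have hred : ∀ w : Euc N, (w + intVec fun i => -⌊w i⌋) ∈ S := by
      intro w i
      have hco : (w + intVec fun i => -⌊w i⌋) i = Int.fract (w i) := by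
        show w i + ((-⌊w i⌋ : ℤ) : ℝ) = _
        rw [Int.fract]
        push_cast
        ring
      rw [hco]
      exact ⟨Int.fract_nonneg _, (Int.fract_lt_one _).le⟩
    have hmem : ((x + intVec fun i => -⌊x i⌋), (y + intVec fun i => -⌊y i⌋)) ∈ S ×ˢ S :=
      Set.mk_mem_prod (hred x) (hred y)
    have := hp hmem
    simpa [hper] using this
  refine ⟨p.1 + intVec (fun i => -(round (p.1 i - p.2 i))), p.2, ?_, ?_, ?_⟩
  · intro x y
    have hiv : intVec (fun _ : Fin N => (0 : ℤ)) = 0 := by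
      ext i
      show ((0 : ℤ) : ℝ) = 0
      norm_num
    have := hper p.1 p.2 (fun i => -(round (p.1 i - p.2 i))) (fun _ => 0)
    rw [hiv, add_zero] at this
    rw [this]
    exact hmax x y
  · intro i
    have hco : (p.1 + intVec fun i => -(round (p.1 i - p.2 i))) i
        = p.1 i - round (p.1 i - p.2 i) := by
      show p.1 i + ((-(round (p.1 i - p.2 i)) : ℤ) : ℝ) = _
      push_cast
      ring
    rw [hco, show p.1 i - ↑(round (p.1 i - p.2 i)) - p.2 i
      = (p.1 i - p.2 i) - round (p.1 i - p.2 i) by ring]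
    exact abs_sub_round _
  · intro i
    have := hpS.2 i
    rw [abs_le]
    exact ⟨by linarith [this.1], this.2⟩

/-- Comparison principle for the cell problem. -/
theorem comparison_principle_cell_problem {N : ℕ} (hN : 1 ≤ N)
    (H : Euc N → Euc N → ℝ)
    (hHc : Continuous fun q : Euc N × Euc N => H q.1 q.2)
    (hHp : IsZPeriodicH H)
    (P : Euc N) (a b : ℝ) (u v : Euc N → ℝ)
    (hulip : ∃ K : NNReal, LipschitzWith K u) (huper : IsZPeriodic u)
    (husub : IsCellSubsolution H P a u)
    (hvlip : ∃ K : NNReal, LipschitzWith K v) (hvper : IsZPeriodic v)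
    (hvsuper : IsCellSupersolution H P b v) :
    b ≤ a := by
  classical
  obtain ⟨Lu, hLu⟩ := hulip
  obtain ⟨Lv, hLv⟩ := hvlip
  obtain ⟨L, hLdef⟩ : ∃ L : ℝ, L = (Lu : ℝ) := ⟨_, rfl⟩
  have hL0 : 0 ≤ L := hLdef ▸ Lu.coe_nonneg
  have hpi := Real.pi_pos
  have hucont : Continuous u := hLu.continuous
  have hvcont : Continuous v := hLv.continuous
  refine le_of_forall_pos_le_add ?_
  intro ε hε
  obtain ⟨R1, hR1⟩ : ∃ r : ℝ, r = 2 * Real.sqrt N := ⟨_, rfl⟩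
  obtain ⟨R2, hR2⟩ : ∃ r : ℝ, r = Real.pi ^ 2 * L / 2 + ‖P‖ := ⟨_, rfl⟩
  obtain ⟨T, hT⟩ : ∃ T : Set (Euc N × Euc N),
      T = Metric.closedBall 0 R1 ×ˢ Metric.closedBall 0 R2 := ⟨_, rfl⟩
  have hTcomp : IsCompact T := by
    rw [hT]; exact (isCompact_closedBall _ _).prod (isCompact_closedBall _ _)
  have hUC := hTcomp.uniformContinuousOn_of_continuous hHc.continuousOn
  rw [Metric.uniformContinuousOn_iff] at hUC
  obtain ⟨δ, hδ, hδ'⟩ := hUC ε hε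
  have hδne : δ ≠ 0 := ne_of_gt hδ
  obtain ⟨K, hKdef⟩ : ∃ k : ℝ, k = L / (8 * δ) + 1 := ⟨_, rfl⟩
  have hK : 0 < K := by rw [hKdef]; positivity
  obtain ⟨F, hF⟩ : ∃ F : Euc N → Euc N → ℝ,
      F = fun x y => u x - v y - K * Gf (x - y) := ⟨_, rfl⟩
  have hFc : Continuous fun p : Euc N × Euc N => F p.1 p.2 := by
    rw [hF]
    apply Continuous.sub
    · exact (hucont.comp continuous_fst).sub (hvcont.comp continuous_snd)
    · exact continuous_const.mul (contDiff_Gf.continuous.comp (continuous_fst.sub continuous_snd))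
  have hFper : ∀ x y zx zy, F (x + intVec zx) (y + intVec zy) = F x y := by
    intro x y zx zy
    have h2 : intVec (fun i => zx i - zy i) = intVec zx - intVec zy := by
      ext i
      show ((zx i - zy i : ℤ) : ℝ) = (zx i : ℝ) - (zy i : ℝ)
      push_cast
      ring
    have h1 : (x + intVec zx) - (y + intVec zy) = (x - y) + intVec (fun i => zx i - zy i) := by
      rw [h2]; abel
    simp only [hF, huper x zx, hvper y zy, h1, Gf_periodic]
  obtain ⟨xh, yh, hmax, hhalf, hy1⟩ := exists_good_max F hFc hFper
  -- key quantitative bounds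
  have hstep : K * Gf (xh - yh) ≤ L * ‖xh - yh‖ := by
    have h1 := hmax yh yh
    simp only [hF] at h1
    rw [sub_self, Gf_zero, mul_zero] at h1
    have h3 := hLu.dist_le_mul xh yh
    rw [Real.dist_eq, dist_eq_norm, ← hLdef] at h3
    have h2 : u xh - u yh ≤ L * ‖xh - yh‖ := (le_abs_self _).trans h3
    linarith
  have hgl : 8 * ‖xh - yh‖ ^ 2 ≤ Gf (xh - yh) := by
    apply Gf_lower
    intro i
    exact hhalf i
  have h8 : 8 * K * ‖xh - yh‖ ^ 2 ≤ L * ‖xh - yh‖ := by nlinarith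
  have hKz : K * ‖xh - yh‖ ≤ L / 8 := by
    rcases eq_or_lt_of_le (norm_nonneg (xh - yh)) with h0 | h0
    · rw [← h0, mul_zero]; linarith
    · have h9 : (8 * (K * ‖xh - yh‖)) * ‖xh - yh‖ ≤ L * ‖xh - yh‖ := by
        linear_combination h8
      have h10 := le_of_mul_le_mul_right h9 h0
      linarith
  have hKδ : K * δ = L / 8 + δ := by
    rw [hKdef]; field_simp
  have hzδ : ‖xh - yh‖ < δ := by
    have h1 : K * ‖xh - yh‖ < K * δ := by rw [hKδ]; linarith
    exact lt_of_mul_lt_mul_left h1 hK.le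
  obtain ⟨q, hq⟩ : ∃ q : Euc N, q = K • Wf (xh - yh) := ⟨_, rfl⟩
  have hqnorm : ‖q‖ ≤ Real.pi ^ 2 * L / 2 := by
    rw [hq, norm_smul, Real.norm_eq_abs, abs_of_pos hK]
    calc K * ‖Wf (xh - yh)‖ ≤ K * (4 * Real.pi ^ 2 * ‖xh - yh‖) :=
          mul_le_mul_of_nonneg_left (norm_Wf_le _) hK.le
    _ = 4 * Real.pi ^ 2 * (K * ‖xh - yh‖) := by ring
    _ ≤ 4 * Real.pi ^ 2 * (L / 8) := by nlinarith
    _ = Real.pi ^ 2 * L / 2 := by ring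
  -- viscosity inequalities
  have hsub : H xh (q + P) ≤ a := by
    apply husub xh
    refine ⟨fun x => K * Gf (x - yh), ?_, ?_, ?_, ?_⟩
    · exact contDiff_const.mul (contDiff_Gf.comp (contDiff_id.sub contDiff_const))
    · intro x m
      have h1 : (x + intVec m) - yh = (x - yh) + intVec m := by abel
      simp only [h1, Gf_periodic]
    · intro y
      have h1 := hmax y yh
      simp only [hF] at h1
      dsimp only
      linarith
    · rw [grad_phi, hq]
  have hsup : b ≤ H yh (q + P) := by
    apply hvsuper yh
    refine ⟨fun y => -(K * Gf (xh - y)), ?_, ?_, ?_, ?_⟩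
    · exact (contDiff_const.mul (contDiff_Gf.comp (contDiff_const.sub contDiff_id))).neg
    · intro y m
      have h1 : xh - (y + intVec m) = (xh - y) + intVec (fun i => -(m i)) := by
        rw [intVec_neg]; abel
      simp only [h1, Gf_periodic]
    · intro y
      have h1 := hmax xh y
      simp only [hF] at h1
      dsimp only
      linarith
    · rw [grad_psi, hq]
  -- both points lie in T and are close
  have hsN : 0 ≤ Real.sqrt N := Real.sqrt_nonneg N
  have hqP : ‖q + P‖ ≤ R2 := by
    calc ‖q + P‖ ≤ ‖q‖ + ‖P‖ := norm_add_le _ _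
    _ ≤ R2 := by rw [hR2]; linarith
  have hyT : ((yh, q + P) : Euc N × Euc N) ∈ T := by
    rw [hT, Set.mem_prod]
    constructor
    · rw [mem_closedBall_zero_iff]
      calc ‖yh‖ ≤ 1 * Real.sqrt N := norm_le_of_comp zero_le_one hy1
      _ ≤ R1 := by rw [hR1]; nlinarith
    · rw [mem_closedBall_zero_iff]; exact hqP
  have hxT : ((xh, q + P) : Euc N × Euc N) ∈ T := by
    rw [hT, Set.mem_prod]
    constructor
    · rw [mem_closedBall_zero_iff]
      have hxc : ∀ i, |xh i| ≤ 3 / 2 := by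
        intro i
        have h1 := hhalf i
        have h2 := hy1 i
        have h3 := abs_sub_abs_le_abs_sub (xh i) (yh i)
        linarith
      calc ‖xh‖ ≤ (3 / 2) * Real.sqrt N := norm_le_of_comp (by norm_num) hxc
      _ ≤ R1 := by rw [hR1]; nlinarith
    · rw [mem_closedBall_zero_iff]; exact hqP
  have hdist : dist ((xh, q + P) : Euc N × Euc N) (yh, q + P) < δ := by
    rw [Prod.dist_eq]
    simp only [dist_self]
    rw [max_eq_left dist_nonneg, dist_eq_norm]
    exact hzδ
  have hclose := hδ' _ hxT _ hyT hdist
  simp only [Real.dist_eq] at hclose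
  have habs := abs_lt.mp hclose
  linarith [hsub, hsup, habs.1, habs.2]
end
end

section
/- Uniqueness and variational characterization of the critical value: Let H : ℝ^N × ℝ^N → ℝ be continuous and ℤ^N-periodic in its first variable and let P ∈ ℝ^N. If (u, c) and (v, d) are both solutions of the cell problem H(x, Du + P) = a on T^N, then c = d; moreover c = inf{a ∈ ℝ : there exists a Lipschitz continuous ℤ^N-periodic viscosity subsolution of H(x, Du + P) = a on T^N} = sup{a ∈ ℝ : there exists a Lipschitz continuous ℤ^N-periodic viscosity supersolution of H(x, Dv + P) = a on T^N}. -/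
open Set Filter MeasureTheory Topology

noncomputable section

namespace CellAux

open Real

variable {N : ℕ}

lemma intVec_apply (z : Fin N → ℤ) (i : Fin N) : intVec z i = (z i : ℝ) := rfl
lemma sub_apply' (x y : Euc N) (i : Fin N) : (x - y) i = x i - y i := rfl
lemma add_apply' (x y : Euc N) (i : Fin N) : (x + y) i = x i + y i := rfl
lemma proj_apply' (i : Fin N) (h : Euc N) :
    (EuclideanSpace.proj i (𝕜 := ℝ) : Euc N →L[ℝ] ℝ) h = h i := rfl

lemma intVec_neg (z : Fin N → ℤ) : intVec (-z) = -(intVec z) := by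
  apply (EuclideanSpace.equiv (Fin N) ℝ).injective
  funext i
  show ((-z) i : ℝ) = -(intVec z i)
  rw [intVec_apply]; push_cast; simp

def sfun (ξ : Euc N) : ℝ := ∑ i, (1 - Real.cos (2 * π * ξ i))

def pvec (n : ℝ) (ξ : Euc N) : Euc N :=
  (EuclideanSpace.equiv (Fin N) ℝ).symm (fun i => n * (2 * π * Real.sin (2 * π * ξ i)))

lemma pvec_apply (n : ℝ) (ξ : Euc N) (i : Fin N) :
    pvec n ξ i = n * (2 * π * Real.sin (2 * π * ξ i)) := rfl

lemma sfun_nonneg (ξ : Euc N) : 0 ≤ sfun ξ :=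
  Finset.sum_nonneg fun i _ => by linarith [Real.cos_le_one (2 * π * ξ i)]

lemma sfun_zero : sfun (0 : Euc N) = 0 := by simp [sfun]

lemma sfun_periodic (ξ : Euc N) (z : Fin N → ℤ) : sfun (ξ + intVec z) = sfun ξ := by
  unfold sfun
  congr 1; ext i
  rw [add_apply', intVec_apply, show 2*π*(ξ i + (z i : ℝ)) = 2*π*ξ i + (z i) * (2*π) by ring,
    Real.cos_add_int_mul_two_pi]

lemma continuous_sfun : Continuous (sfun (N := N)) := by
  refine continuous_finset_sum _ fun i _ => ?_
  exact continuous_const.sub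
    (Real.continuous_cos.comp (continuous_const.mul (EuclideanSpace.proj i (𝕜 := ℝ)).continuous))

lemma sfun_close (ξ : Euc N) : ∃ z : Fin N → ℤ, ‖ξ - intVec z‖^2 ≤ N * sfun ξ / 8 := by
  have key : ∀ t : ℝ, 8 * (t - round t)^2 ≤ 1 - Real.cos (2*π*t) := by
    intro t
    have h1 : |t - (round t : ℝ)| ≤ 1/2 := abs_sub_round t
    have h2 : Real.cos (2*π*t) = Real.cos (2*π*(t - round t)) := by
      rw [show 2*π*t = 2*π*(t - round t) + (round t) * (2*π) by ring, Real.cos_add_int_mul_two_pi]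
    have h3 : |2*π*(t - round t)| ≤ π := by
      rw [show 2*π*(t-round t) = (2*π)*(t - round t) by ring, abs_mul,
        abs_of_pos (by positivity : (0:ℝ) < 2*π)]
      nlinarith [Real.pi_pos]
    have h4 := Real.cos_le_one_sub_mul_cos_sq h3
    have h5 : 2/π^2 * (2*π*(t - round t))^2 = 8*(t - round t)^2 := by field_simp; ring
    rw [h2]; nlinarith
  refine ⟨fun i => round (ξ i), ?_⟩
  have hterm : ∀ i : Fin N, (ξ i - round (ξ i))^2 ≤ sfun ξ / 8 := by
    intro i
    have h1 := key (ξ i)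
    have h2 : (1 - Real.cos (2*π*ξ i)) ≤ sfun ξ := by
      refine Finset.single_le_sum (f := fun j => 1 - Real.cos (2*π*ξ j))
        (fun j _ => ?_) (Finset.mem_univ i)
      show (0:ℝ) ≤ 1 - Real.cos (2*π*ξ j)
      linarith [Real.cos_le_one (2*π*ξ j)]
    linarith
  have hnorm : ‖ξ - intVec (fun i => round (ξ i))‖^2 = ∑ i, (ξ i - round (ξ i))^2 := by
    rw [EuclideanSpace.norm_eq, Real.sq_sqrt (Finset.sum_nonneg fun i _ => sq_nonneg _)]
    congr 1; ext i
    rw [sub_apply', Real.norm_eq_abs, sq_abs]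
    rfl
  rw [hnorm]
  calc ∑ i, (ξ i - round (ξ i))^2 ≤ ∑ _i : Fin N, sfun ξ / 8 :=
        Finset.sum_le_sum fun i _ => hterm i
    _ = N * sfun ξ / 8 := by rw [Finset.sum_const]; simp [Finset.card_univ]; ring

lemma contDiff_phi (n : ℝ) (y0 : Euc N) :
    ContDiff ℝ 1 (fun x : Euc N => n * sfun (x - y0)) := by
  have : (fun x : Euc N => n * sfun (x - y0))
      = fun x => n * ∑ i, (1 - Real.cos (2 * π * (x i - y0 i))) := by
    funext x; simp only [sfun, sub_apply']
  rw [this]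
  refine contDiff_const.mul (ContDiff.sum fun i _ => ?_)
  refine contDiff_const.sub (Real.contDiff_cos.comp ?_)
  exact contDiff_const.mul (((EuclideanSpace.proj i (𝕜 := ℝ)).contDiff).sub contDiff_const)

lemma contDiff_psi (n : ℝ) (x0 : Euc N) :
    ContDiff ℝ 1 (fun y : Euc N => -(n * sfun (x0 - y))) := by
  have : (fun y : Euc N => -(n * sfun (x0 - y)))
      = fun y => -(n * ∑ i, (1 - Real.cos (2 * π * (x0 i - y i)))) := by
    funext y; simp only [sfun, sub_apply']
  rw [this]
  refine (contDiff_const.mul (ContDiff.sum fun i _ => ?_)).neg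
  refine contDiff_const.sub (Real.contDiff_cos.comp ?_)
  exact contDiff_const.mul (contDiff_const.sub (EuclideanSpace.proj i (𝕜 := ℝ)).contDiff)

lemma phi_periodic (n : ℝ) (y0 : Euc N) : IsZPeriodic (fun x : Euc N => n * sfun (x - y0)) := by
  intro x z
  show n * sfun (x + intVec z - y0) = n * sfun (x - y0)
  have h : x + intVec z - y0 = (x - y0) + intVec z := by abel
  rw [h, sfun_periodic]

lemma psi_periodic (n : ℝ) (x0 : Euc N) :
    IsZPeriodic (fun y : Euc N => -(n * sfun (x0 - y))) := by
  intro y z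
  show -(n * sfun (x0 - (y + intVec z))) = -(n * sfun (x0 - y))
  have h : x0 - (y + intVec z) = (x0 - y) + intVec (-z) := by rw [intVec_neg]; abel
  rw [h, sfun_periodic]

lemma toDual_pvec (n : ℝ) (ξ : Euc N) :
    (InnerProductSpace.toDual ℝ (Euc N) (pvec n ξ) : Euc N →L[ℝ] ℝ)
      = n • ∑ i, (2*π*Real.sin (2*π*ξ i)) • (EuclideanSpace.proj i (𝕜 := ℝ) : Euc N →L[ℝ] ℝ) := by
  ext h
  rw [InnerProductSpace.toDual_apply_apply, PiLp.inner_apply]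
  simp only [ContinuousLinearMap.smul_apply, ContinuousLinearMap.coe_sum',
    Finset.sum_apply, ContinuousLinearMap.coe_smul', Pi.smul_apply,
    proj_apply', smul_eq_mul, RCLike.inner_apply, conj_trivial]
  rw [Finset.mul_sum]
  congr 1; ext i
  rw [pvec_apply]; ring

lemma hasGradientAt_phi (n : ℝ) (y0 x : Euc N) :
    HasGradientAt (fun x : Euc N => n * sfun (x - y0)) (pvec n (x - y0)) x := by
  rw [hasGradientAt_iff_hasFDerivAt, toDual_pvec]
  have hterm : ∀ i : Fin N, HasFDerivAt (fun x : Euc N => 1 - Real.cos (2*π*(x i - y0 i)))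
      ((2*π*Real.sin (2*π*(x i - y0 i))) • (EuclideanSpace.proj i (𝕜 := ℝ) : Euc N →L[ℝ] ℝ)) x := by
    intro i
    have h1 : HasDerivAt (fun t : ℝ => 1 - Real.cos (2*π*t))
        (2*π*Real.sin (2*π*(x i - y0 i))) (x i - y0 i) := by
      have h0 : HasDerivAt (fun t : ℝ => 2*π*t) (2*π) (x i - y0 i) := by
        simpa using (hasDerivAt_id (x i - y0 i)).const_mul (2*π)
      have := (Real.hasDerivAt_cos (2*π*(x i - y0 i))).comp (x i - y0 i) h0
      have h2 := this.const_sub 1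
      exact h2.congr_deriv (by ring)
    have h2 : HasFDerivAt (fun x : Euc N => x i - y0 i)
        (EuclideanSpace.proj i (𝕜 := ℝ) : Euc N →L[ℝ] ℝ) x :=
      (EuclideanSpace.proj i (𝕜 := ℝ)).hasFDerivAt.sub_const _
    have h3 := h1.comp_hasFDerivAt x h2
    exact h3
  have hsum := HasFDerivAt.fun_sum (fun i (_ : i ∈ Finset.univ) => hterm i)
  have hmul := hsum.const_mul n
  have heq : (fun x : Euc N => n * ∑ i, (1 - Real.cos (2*π*(x i - y0 i))))
      = fun x : Euc N => n * sfun (x - y0) := by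
    funext x; simp only [sfun, sub_apply']
  rw [heq] at hmul
  exact hmul

lemma hasGradientAt_psi (n : ℝ) (x0 y : Euc N) :
    HasGradientAt (fun y : Euc N => -(n * sfun (x0 - y))) (pvec n (x0 - y)) y := by
  rw [hasGradientAt_iff_hasFDerivAt, toDual_pvec]
  have hterm : ∀ i : Fin N, HasFDerivAt (fun y : Euc N => 1 - Real.cos (2*π*(x0 i - y i)))
      ((2*π*Real.sin (2*π*(x0 i - y i))) •
        (-(EuclideanSpace.proj i (𝕜 := ℝ) : Euc N →L[ℝ] ℝ))) y := by
    intro i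
    have h1 : HasDerivAt (fun t : ℝ => 1 - Real.cos (2*π*t))
        (2*π*Real.sin (2*π*(x0 i - y i))) (x0 i - y i) := by
      have h0 : HasDerivAt (fun t : ℝ => 2*π*t) (2*π) (x0 i - y i) := by
        simpa using (hasDerivAt_id (x0 i - y i)).const_mul (2*π)
      have := (Real.hasDerivAt_cos (2*π*(x0 i - y i))).comp (x0 i - y i) h0
      have h2 := this.const_sub 1
      exact h2.congr_deriv (by ring)
    have h2 : HasFDerivAt (fun y : Euc N => x0 i - y i)
        (-(EuclideanSpace.proj i (𝕜 := ℝ) : Euc N →L[ℝ] ℝ)) y :=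
      (EuclideanSpace.proj i (𝕜 := ℝ)).hasFDerivAt.const_sub _
    have h3 := h1.comp_hasFDerivAt y h2
    exact h3
  have hsum := HasFDerivAt.fun_sum (fun i (_ : i ∈ Finset.univ) => hterm i)
  have hmul := (hsum.const_mul n).fun_neg
  have heq : (fun y : Euc N => -(n * ∑ i, (1 - Real.cos (2*π*(x0 i - y i)))))
      = fun y : Euc N => -(n * sfun (x0 - y)) := by
    funext y; simp only [sfun, sub_apply']
  rw [heq] at hmul
  have hclm : (-(n • ∑ i : Fin N, (2*π*Real.sin (2*π*(x0 i - y i))) •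
        (-(EuclideanSpace.proj i (𝕜 := ℝ) : Euc N →L[ℝ] ℝ))))
      = n • ∑ i : Fin N, (2*π*Real.sin (2*π*(x0 i - y i))) •
        (EuclideanSpace.proj i (𝕜 := ℝ) : Euc N →L[ℝ] ℝ) := by
    rw [show (∑ i : Fin N, (2*π*Real.sin (2*π*(x0 i - y i))) •
        (-(EuclideanSpace.proj i (𝕜 := ℝ) : Euc N →L[ℝ] ℝ)))
        = -∑ i : Fin N, (2*π*Real.sin (2*π*(x0 i - y i))) •
        (EuclideanSpace.proj i (𝕜 := ℝ) : Euc N →L[ℝ] ℝ) by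
      rw [← Finset.sum_neg_distrib]; congr 1; funext i; rw [smul_neg]]
    rw [smul_neg, neg_neg]
  rw [hclm] at hmul
  exact hmul

def Kset (N : ℕ) : Set (Euc N) := {x | ∀ i, x i ∈ Icc (0:ℝ) 1}

lemma norm_le_of_mem_Kset {x : Euc N} (hx : x ∈ Kset N) : ‖x‖ ≤ Real.sqrt N := by
  rw [EuclideanSpace.norm_eq]
  apply Real.sqrt_le_sqrt
  calc ∑ i, ‖x i‖^2 ≤ ∑ _i : Fin N, (1:ℝ) := by
        refine Finset.sum_le_sum fun i _ => ?_
        have h := hx i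
        have : ‖x i‖ ≤ 1 := by rw [Real.norm_eq_abs, abs_le]; constructor <;> linarith [h.1, h.2]
        nlinarith [norm_nonneg (x i)]
    _ = N := by simp

lemma isCompact_Kset : IsCompact (Kset N) := by
  have hclosed : IsClosed (Kset N) := by
    have : Kset N = ⋂ i, (⇑(EuclideanSpace.proj i (𝕜 := ℝ))) ⁻¹' Icc 0 1 := by
      ext x; simp [Kset]
    rw [this]
    exact isClosed_iInter fun i => isClosed_Icc.preimage (EuclideanSpace.proj i).continuous
  exact (isCompact_closedBall (0 : Euc N) (Real.sqrt N)).of_isClosed_subset hclosed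
    (fun x hx => by rw [Metric.mem_closedBall, dist_zero_right]; exact norm_le_of_mem_Kset hx)

lemma exists_mem_Kset (x : Euc N) : ∃ z : Fin N → ℤ, x - intVec z ∈ Kset N := by
  refine ⟨fun i => ⌊x i⌋, fun i => ?_⟩
  rw [sub_apply', intVec_apply]
  exact ⟨sub_nonneg.2 (Int.floor_le _), by linarith [(Int.lt_floor_add_one (x i)).le]⟩

lemma exists_max_pair (Φ : Euc N → Euc N → ℝ)
    (hc : Continuous fun q : Euc N × Euc N => Φ q.1 q.2)
    (hper : ∀ x y (zx zy : Fin N → ℤ), Φ (x + intVec zx) (y + intVec zy) = Φ x y) :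
    ∃ x y, x ∈ Kset N ∧ y ∈ Kset N ∧ ∀ x' y', Φ x' y' ≤ Φ x y := by
  have hKne : (Kset N).Nonempty := ⟨0, fun i => by constructor <;> simp⟩
  obtain ⟨⟨x, y⟩, hmem, hmax⟩ :=
    (isCompact_Kset.prod isCompact_Kset).exists_isMaxOn (hKne.prod hKne) hc.continuousOn
  refine ⟨x, y, hmem.1, hmem.2, fun x' y' => ?_⟩
  obtain ⟨zx, hzx⟩ := exists_mem_Kset x'
  obtain ⟨zy, hzy⟩ := exists_mem_Kset y'
  have h := hmax (Set.mk_mem_prod hzx hzy)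
  calc Φ x' y' = Φ ((x' - intVec zx) + intVec zx) ((y' - intVec zy) + intVec zy) := by
        rw [sub_add_cancel, sub_add_cancel]
    _ = Φ (x' - intVec zx) (y' - intVec zy) := hper _ _ _ _
    _ ≤ Φ x y := h

lemma grad_bound {Kv : NNReal} {v ψ : Euc N → ℝ} {p y0 : Euc N}
    (hKv : LipschitzWith Kv v)
    (hψ : HasGradientAt ψ p y0)
    (hmin : ∀ y, ψ y - ψ y0 ≤ v y - v y0) : ‖p‖ ≤ Kv := by
  rcases eq_or_ne p 0 with hp | hp
  · simp [hp]
  have hline : HasDerivAt (fun t : ℝ => y0 + t • p) p 0 := by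
    have h1 : HasDerivAt (fun t : ℝ => t • p) ((1:ℝ) • p) 0 := (hasDerivAt_id 0).smul_const p
    rw [one_smul] at h1
    exact h1.const_add y0
  have hcomp : HasDerivAt (fun t : ℝ => ψ (y0 + t • p)) (‖p‖^2) 0 := by
    have hF := (hasGradientAt_iff_hasFDerivAt.mp hψ)
    have hg0 : y0 + (0:ℝ) • p = y0 := by simp
    rw [← hg0] at hF
    have := hF.comp_hasDerivAt 0 hline
    rw [InnerProductSpace.toDual_apply_apply, real_inner_self_eq_norm_sq] at this
    exact this
  have hslope := hasDerivAt_iff_tendsto_slope.mp hcomp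
  have h2 : Tendsto (slope (fun t : ℝ => ψ (y0 + t • p)) 0) (𝓝[>] 0) (𝓝 (‖p‖^2)) :=
    hslope.mono_left (nhdsWithin_mono 0 (fun t ht => ne_of_gt ht))
  have h3 : ‖p‖^2 ≤ Kv * ‖p‖ := by
    refine le_of_tendsto h2 ?_
    filter_upwards [self_mem_nhdsWithin] with t ht
    have ht' : (0:ℝ) < t := ht
    have hv2 : ψ (y0 + t • p) - ψ y0 ≤ Kv * (t * ‖p‖) := by
      have hd : dist (y0 + t • p) y0 = t * ‖p‖ := by
        rw [dist_eq_norm]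
        simp [norm_smul, abs_of_pos ht']
      calc ψ (y0 + t • p) - ψ y0 ≤ v (y0 + t • p) - v y0 := hmin _
        _ ≤ |v (y0 + t • p) - v y0| := le_abs_self _
        _ = dist (v (y0 + t • p)) (v y0) := (Real.dist_eq _ _).symm
        _ ≤ Kv * dist (y0 + t • p) y0 := hKv.dist_le_mul _ _
        _ = Kv * (t * ‖p‖) := by rw [hd]
    rw [slope_def_field]
    have h0 : ψ (y0 + (0:ℝ) • p) = ψ y0 := by simp
    rw [h0, sub_zero, div_le_iff₀ ht']
    calc ψ (y0 + t • p) - ψ y0 ≤ Kv * (t * ‖p‖) := hv2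
      _ = Kv * ‖p‖ * t := by ring
  have hppos : 0 < ‖p‖ := norm_pos_iff.mpr hp
  rw [sq] at h3
  exact le_of_mul_le_mul_right h3 hppos

lemma comparison (H : Euc N → Euc N → ℝ)
    (hHc : Continuous fun q : Euc N × Euc N => H q.1 q.2)
    (hHp : IsZPeriodicH H) (P : Euc N)
    {w v : Euc N → ℝ} {a b : ℝ}
    (hwL : ∃ K : NNReal, LipschitzWith K w) (hwP : IsZPeriodic w)
    (hwS : IsCellSubsolution H P a w)
    (hvL : ∃ K : NNReal, LipschitzWith K v) (hvP : IsZPeriodic v)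
    (hvS : IsCellSupersolution H P b v) : b ≤ a := by
  by_contra hab
  push_neg at hab
  obtain ⟨Kw, hKw⟩ := hwL
  obtain ⟨Kv, hKv⟩ := hvL
  have hwc : Continuous w := hKw.continuous
  have hvc : Continuous v := hKv.continuous
  -- oscillation bound for w
  obtain ⟨x0, y0, _, _, hC⟩ := exists_max_pair (fun x y => w x - w y)
    ((hwc.comp continuous_fst).sub (hwc.comp continuous_snd))
    (fun x y zx zy => by
      show w (x + intVec zx) - w (y + intVec zy) = w x - w y
      rw [hwP, hwP])
  set C : ℝ := w x0 - w y0 with hCdef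
  have hC0 : 0 ≤ C := by have := hC 0 0; simpa using this
  -- uniform continuity of H on a compact set
  set R : ℝ := Real.sqrt N + 1
  set R' : ℝ := ‖P‖ + Kv
  set S : Set (Euc N × Euc N) := Metric.closedBall 0 R ×ˢ Metric.closedBall 0 R' with hSdef
  have hUC := ((isCompact_closedBall (0 : Euc N) R).prod
    (isCompact_closedBall (0 : Euc N) R')).uniformContinuousOn_of_continuous hHc.continuousOn
  rw [Metric.uniformContinuousOn_iff] at hUC
  obtain ⟨δ, hδ0, hδ⟩ := hUC (b - a) (by linarith)
  set m : ℝ := min δ 1 with hmdef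
  have hm0 : 0 < m := lt_min hδ0 one_pos
  -- choose n
  obtain ⟨n, hn⟩ := exists_nat_gt (N * C / (8 * m^2))
  have hn0 : (0:ℝ) < n := lt_of_le_of_lt (by positivity) hn
  set nn : ℝ := (n : ℝ) with hnndef
  -- maximize the doubled functional
  obtain ⟨xb, yb, hxbK, hybK, hmax⟩ := exists_max_pair
    (fun x y => w x - v y - nn * sfun (x - y))
    (by
      refine ((hwc.comp continuous_fst).sub (hvc.comp continuous_snd)).sub ?_
      exact continuous_const.mul (continuous_sfun.comp (continuous_fst.sub continuous_snd)))
    (by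
      intro x y zx zy
      have hxy : (x + intVec zx) - (y + intVec zy) = (x - y) + (intVec zx - intVec zy) := by abel
      have hz : intVec zx - intVec zy = intVec (zx - zy) := by
        apply (EuclideanSpace.equiv (Fin N) ℝ).injective
        funext i
        show (intVec zx - intVec zy) i = (intVec (zx - zy)) i
        rw [sub_apply', intVec_apply, intVec_apply, intVec_apply]
        simp [Pi.sub_apply]
      show w (x + intVec zx) - v (y + intVec zy)
          - nn * sfun ((x + intVec zx) - (y + intVec zy)) = w x - v y - nn * sfun (x - y)
      rw [hwP, hvP, hxy, hz, sfun_periodic])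
  set ξ : Euc N := xb - yb with hξdef
  set p : Euc N := pvec nn ξ with hpdef
  -- p is in the superdifferential of w at xb
  have hsuper : p ∈ superDiff w xb := by
    refine ⟨fun x => nn * sfun (x - yb), contDiff_phi nn yb, phi_periodic nn yb, ?_, ?_⟩
    · intro x
      have := hmax x yb
      simp only at this ⊢
      linarith
    · exact ((hasGradientAt_phi nn yb xb).gradient).symm
  -- p is in the subdifferential of v at yb
  have hψmin : ∀ y, (-(nn * sfun (xb - y))) - (-(nn * sfun (xb - yb))) ≤ v y - v yb := by
    intro y
    have := hmax xb y
    linarith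
  have hsub : p ∈ subDiff v yb := by
    refine ⟨fun y => -(nn * sfun (xb - y)), contDiff_psi nn xb, psi_periodic nn xb, ?_, ?_⟩
    · intro y
      have h := hψmin y
      show v yb - (-(nn * sfun (xb - yb))) ≤ v y - (-(nn * sfun (xb - y)))
      linarith
    · exact ((hasGradientAt_psi nn xb yb).gradient).symm
  have hHa : H xb (p + P) ≤ a := hwS xb p hsuper
  have hHb : b ≤ H yb (p + P) := hvS yb p hsub
  -- gradient bound
  have hpKv : ‖p‖ ≤ (Kv : ℝ) :=
    grad_bound hKv (hasGradientAt_psi nn xb yb) hψmin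
  -- sfun bound
  have hsf : nn * sfun ξ ≤ C := by
    have h1 := hmax yb yb
    have h2 : (yb : Euc N) - yb = 0 := sub_self yb
    rw [h2, sfun_zero] at h1
    have h3 := hC xb yb
    linarith
  have hsfb : sfun ξ ≤ C / nn := by
    rw [le_div_iff₀ hn0]
    linarith [hsf]
  -- lattice point close to ξ
  obtain ⟨z, hz⟩ := sfun_close ξ
  have hzsmall : ‖ξ - intVec z‖ < m := by
    have h1 : ‖ξ - intVec z‖^2 ≤ N * (C / nn) / 8 := by
      calc ‖ξ - intVec z‖^2 ≤ N * sfun ξ / 8 := hz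
        _ ≤ N * (C / nn) / 8 := by
            have : (N:ℝ) * sfun ξ ≤ N * (C / nn) :=
              mul_le_mul_of_nonneg_left hsfb (by positivity)
            linarith
    have h2 : (N:ℝ) * (C / nn) / 8 < m^2 := by
      have hnn : (N:ℝ)*C < nn * (8*m^2) := (div_lt_iff₀ (by positivity : (0:ℝ) < 8*m^2)).mp hn
      have heq : (N:ℝ)*(C/nn)/8 = N*C/(8*nn) := by
        field_simp
      rw [heq, div_lt_iff₀ (by positivity : (0:ℝ) < 8*nn)]
      nlinarith
    by_contra hcon
    push_neg at hcon
    nlinarith [norm_nonneg (ξ - intVec z)]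
  set x' : Euc N := xb - intVec z with hx'def
  have hHshift : H xb (p + P) = H x' (p + P) := by
    have h := hHp x' (p + P) z
    rw [show x' + intVec z = xb by rw [hx'def]; abel] at h
    exact h
  -- memberships
  have hybR : (yb, p + P) ∈ S := by
    constructor
    · rw [Metric.mem_closedBall, dist_zero_right]
      have := norm_le_of_mem_Kset hybK
      have h1 : Real.sqrt N ≤ R := by rw [show R = Real.sqrt N + 1 from rfl]; linarith
      linarith
    · rw [Metric.mem_closedBall, dist_zero_right]
      calc ‖p + P‖ ≤ ‖p‖ + ‖P‖ := norm_add_le _ _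
        _ ≤ Kv + ‖P‖ := by linarith [hpKv]
        _ = R' := by rw [show R' = ‖P‖ + Kv from rfl]; ring
  have hx'R : (x', p + P) ∈ S := by
    constructor
    · rw [Metric.mem_closedBall, dist_zero_right]
      have hxx : x' = yb + (ξ - intVec z) := by rw [hx'def, hξdef]; abel
      rw [hxx]
      calc ‖yb + (ξ - intVec z)‖ ≤ ‖yb‖ + ‖ξ - intVec z‖ := norm_add_le _ _
        _ ≤ Real.sqrt N + 1 := by
            have h1 := norm_le_of_mem_Kset hybK
            have h2 : ‖ξ - intVec z‖ ≤ 1 := le_trans hzsmall.le (min_le_right δ 1)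
            linarith
        _ = R := rfl
    · rw [Metric.mem_closedBall, dist_zero_right]
      calc ‖p + P‖ ≤ ‖p‖ + ‖P‖ := norm_add_le _ _
        _ ≤ Kv + ‖P‖ := by linarith [hpKv]
        _ = R' := by rw [show R' = ‖P‖ + Kv from rfl]; ring
  have hdist : dist ((yb, p + P) : Euc N × Euc N) (x', p + P) < δ := by
    rw [Prod.dist_eq]
    have h1 : dist (p + P) (p + P) = 0 := dist_self _
    have h2 : dist yb x' = ‖ξ - intVec z‖ := by
      rw [dist_eq_norm']
      congr 1
      show xb - intVec z - yb = (xb - yb) - intVec z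
      abel
    rw [h1, h2]
    have : ‖ξ - intVec z‖ < δ := lt_of_lt_of_le hzsmall (min_le_left δ 1)
    exact max_lt this hδ0
  have hfinal := hδ _ hybR _ hx'R hdist
  rw [Real.dist_eq] at hfinal
  have habs : H yb (p + P) - H x' (p + P) < b - a := lt_of_abs_lt hfinal
  rw [← hHshift] at habs
  linarith

end CellAux

/-- Uniqueness and variational characterization of the critical value. -/
theorem critical_value_unique_and_characterized {N : ℕ} (hN : 1 ≤ N)
    (H : Euc N → Euc N → ℝ)
    (hHc : Continuous fun q : Euc N × Euc N => H q.1 q.2)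
    (hHp : IsZPeriodicH H)
    (P : Euc N) (u v : Euc N → ℝ) (c d : ℝ)
    (hu : IsCellSolution H P u c) (hv : IsCellSolution H P v d) :
    c = d ∧
    c = sInf { a : ℝ | ∃ w : Euc N → ℝ, (∃ K : NNReal, LipschitzWith K w) ∧
          IsZPeriodic w ∧ IsCellSubsolution H P a w } ∧
    c = sSup { a : ℝ | ∃ w : Euc N → ℝ, (∃ K : NNReal, LipschitzWith K w) ∧
          IsZPeriodic w ∧ IsCellSupersolution H P a w } := by
  obtain ⟨huL, huP, huSub, huSuper⟩ := hu
  obtain ⟨hvL, hvP, hvSub, hvSuper⟩ := hv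
  have hcd : c = d :=
    le_antisymm
      (CellAux.comparison H hHc hHp P hvL hvP hvSub huL huP huSuper)
      (CellAux.comparison H hHc hHp P huL huP huSub hvL hvP hvSuper)
  refine ⟨hcd, ?_, ?_⟩
  · -- sInf characterization
    set Ssub := { a : ℝ | ∃ w : Euc N → ℝ, (∃ K : NNReal, LipschitzWith K w) ∧
          IsZPeriodic w ∧ IsCellSubsolution H P a w } with hSsub
    have hmem : c ∈ Ssub := ⟨u, huL, huP, huSub⟩
    have hlb : ∀ a ∈ Ssub, c ≤ a := by
      rintro a ⟨w, hwL, hwP, hwS⟩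
      exact CellAux.comparison H hHc hHp P hwL hwP hwS huL huP huSuper
    exact le_antisymm (le_csInf ⟨c, hmem⟩ hlb) (csInf_le ⟨c, hlb⟩ hmem)
  · -- sSup characterization
    set Ssup := { a : ℝ | ∃ w : Euc N → ℝ, (∃ K : NNReal, LipschitzWith K w) ∧
          IsZPeriodic w ∧ IsCellSupersolution H P a w } with hSsup
    have hmem : c ∈ Ssup := ⟨u, huL, huP, huSuper⟩
    have hub : ∀ a ∈ Ssup, a ≤ c := by
      rintro a ⟨w, hwL, hwP, hwS⟩
      exact CellAux.comparison H hHc hHp P huL huP huSub hwL hwP hwS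
    exact le_antisymm (le_csSup ⟨c, hub⟩ hmem) (csSup_le ⟨c, hmem⟩ hub)
end
end

section
/- Estimates of the critical value: Let H : ℝ^N × ℝ^N → ℝ be continuous and ℤ^N-periodic in its first variable, let P ∈ ℝ^N, and let (u, c) be a solution of the cell problem H(x, Du + P) = a on T^N. Then for every ℤ^N-periodic φ ∈ C¹(ℝ^N) one has inf_{x ∈ ℝ^N} H(x, Dφ(x) + P) ≤ c ≤ sup_{x ∈ ℝ^N} H(x, Dφ(x) + P); consequently sup_{φ ∈ C¹ periodic} inf_x H(x, Dφ(x) + P) ≤ c ≤ inf_{φ ∈ C¹ periodic} sup_x H(x, Dφ(x) + P). Moreover H(x, p + P) ≤ c for every x ∈ ℝ^N and every p ∈ D⁺u(x), and c ≤ H(x, p + P) for every x ∈ ℝ^N and every p ∈ D⁻u(x). -/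
open Set Filter MeasureTheory

noncomputable section

lemma exists_global_max {N : ℕ} (f : Euc N → ℝ) (hf : Continuous f)
    (hp : IsZPeriodic f) : ∃ x, ∀ y, f y ≤ f x := by
  set e := EuclideanSpace.equiv (Fin N) ℝ with he
  set S : Set (Fin N → ℝ) := Set.univ.pi fun _ => Icc (0:ℝ) 1 with hSdef
  have hS : IsCompact S := isCompact_univ_pi fun _ => isCompact_Icc
  have hK : IsCompact (e.symm '' S) := hS.image e.symm.continuous
  have hne : (e.symm '' S).Nonempty :=
    ⟨e.symm fun _ => 0, ⟨fun _ => 0, fun i _ => ⟨le_refl _, zero_le_one⟩, rfl⟩⟩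
  obtain ⟨x, -, hx⟩ := hK.exists_isMaxOn hne hf.continuousOn
  refine ⟨x, fun y => ?_⟩
  set z : Fin N → ℤ := fun i => ⌊y i⌋ with hz
  have hmem : y - intVec z ∈ e.symm '' S := by
    refine ⟨fun i => Int.fract (y i), fun i _ => ⟨Int.fract_nonneg _, (Int.fract_lt_one _).le⟩, ?_⟩
    apply PiLp.ext
    intro i
    show Int.fract (y i) = y i - (z i : ℝ)
    exact (Int.self_sub_floor (y i)).symm
  calc f y = f ((y - intVec z) + intVec z) := by rw [sub_add_cancel]
    _ = f (y - intVec z) := hp _ z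
    _ ≤ f x := hx hmem

lemma gradient_zperiodic {N : ℕ} (φ : Euc N → ℝ) (hφ : ContDiff ℝ 1 φ)
    (hp : IsZPeriodic φ) :
    ∀ (x : Euc N) (z : Fin N → ℤ), gradient φ (x + intVec z) = gradient φ x := by
  intro x z
  have hfun : (fun y => φ (y + intVec z)) = φ := funext fun y => hp y z
  have hd : DifferentiableAt ℝ φ (x + intVec z) :=
    (hφ.differentiable one_ne_zero) _
  have h1 : HasFDerivAt (fun y : Euc N => φ (y + intVec z))
      (fderiv ℝ φ (x + intVec z)) x := by
    have := hd.hasFDerivAt.comp x ((hasFDerivAt_id x).add_const (intVec z))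
    exact this
  have hfd : fderiv ℝ φ (x + intVec z) = fderiv ℝ φ x := by
    conv_rhs => rw [← hfun]
    exact (h1.fderiv).symm
  simp only [gradient, hfd]

lemma continuous_gradient' {N : ℕ} (φ : Euc N → ℝ) (hφ : ContDiff ℝ 1 φ) :
    Continuous (gradient φ) := by
  have h1 : Continuous (fderiv ℝ φ) := hφ.continuous_fderiv one_ne_zero
  have : Continuous fun x => (InnerProductSpace.toDual ℝ (Euc N)).symm (fderiv ℝ φ x) :=
    (InnerProductSpace.toDual ℝ (Euc N)).symm.continuous.comp h1
  exact this

lemma key_estimate {N : ℕ}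
    (H : Euc N → Euc N → ℝ)
    (hHc : Continuous fun q : Euc N × Euc N => H q.1 q.2)
    (hHp : IsZPeriodicH H)
    (P : Euc N) (u : Euc N → ℝ) (c : ℝ)
    (hu : IsCellSolution H P u c)
    (φ : Euc N → ℝ) (hφc : ContDiff ℝ 1 φ) (hφp : IsZPeriodic φ) :
    (⨅ x : Euc N, H x (gradient φ x + P)) ≤ c ∧
      c ≤ ⨆ x : Euc N, H x (gradient φ x + P) := by
  obtain ⟨⟨K, hK⟩, hup, hsub, hsup⟩ := hu
  set g : Euc N → ℝ := fun x => H x (gradient φ x + P) with hg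
  have hgc : Continuous g := by
    exact hHc.comp (continuous_id.prodMk ((continuous_gradient' φ hφc).add continuous_const))
  have hgp : IsZPeriodic g := by
    intro x z
    simp only [hg, gradient_zperiodic φ hφc hφp x z, hHp x _ z]
  obtain ⟨x1, hx1⟩ := exists_global_max g hgc hgp
  obtain ⟨x0, hx0⟩ := exists_global_max (fun x => -g x) (hgc.neg) (fun x z => by simp [hgp x z])
  have hbdd_below : BddBelow (Set.range g) := ⟨g x0, by
    rintro r ⟨y, rfl⟩; have := hx0 y; linarith⟩
  have hbdd_above : BddAbove (Set.range g) := ⟨g x1, by rintro r ⟨y, rfl⟩; exact hx1 y⟩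
  have huc : Continuous u := hK.continuous
  constructor
  · obtain ⟨xh, hxh⟩ := exists_global_max (fun x => u x - φ x)
      (huc.sub hφc.continuous) (fun x z => by simp [hup x z, hφp x z])
    have hmem : gradient φ xh ∈ superDiff u xh := ⟨φ, hφc, hφp, hxh, rfl⟩
    exact le_trans (ciInf_le hbdd_below xh) (hsub xh _ hmem)
  · obtain ⟨xl, hxl⟩ := exists_global_max (fun x => φ x - u x)
      (hφc.continuous.sub huc) (fun x z => by simp [hup x z, hφp x z])
    have hmem : gradient φ xl ∈ subDiff u xl :=
      ⟨φ, hφc, hφp, fun y => by have := hxl y; linarith, rfl⟩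
    exact le_trans (hsup xl _ hmem) (le_ciSup hbdd_above xl)

/-- Estimates of the critical value. -/
theorem critical_value_estimates {N : ℕ} (hN : 1 ≤ N)
    (H : Euc N → Euc N → ℝ)
    (hHc : Continuous fun q : Euc N × Euc N => H q.1 q.2)
    (hHp : IsZPeriodicH H)
    (P : Euc N) (u : Euc N → ℝ) (c : ℝ)
    (hu : IsCellSolution H P u c) :
    (∀ φ : Euc N → ℝ, ContDiff ℝ 1 φ → IsZPeriodic φ →
        (⨅ x : Euc N, H x (gradient φ x + P)) ≤ c ∧
        c ≤ ⨆ x : Euc N, H x (gradient φ x + P)) ∧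
    sSup { r : ℝ | ∃ φ : Euc N → ℝ, ContDiff ℝ 1 φ ∧ IsZPeriodic φ ∧
        r = ⨅ x : Euc N, H x (gradient φ x + P) } ≤ c ∧
    c ≤ sInf { r : ℝ | ∃ φ : Euc N → ℝ, ContDiff ℝ 1 φ ∧ IsZPeriodic φ ∧
        r = ⨆ x : Euc N, H x (gradient φ x + P) } ∧
    (∀ x : Euc N, ∀ q ∈ superDiff u x, H x (q + P) ≤ c) ∧
    (∀ x : Euc N, ∀ q ∈ subDiff u x, c ≤ H x (q + P)) := by
  constructor
  · exact fun φ h1 h2 => key_estimate H hHc hHp P u c hu φ h1 h2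
  refine ⟨?_, ?_, hu.2.2.1, hu.2.2.2⟩
  · refine csSup_le ⟨_, (fun _ => 0), contDiff_const, fun x z => rfl, rfl⟩ ?_
    rintro r ⟨φ, h1, h2, rfl⟩
    exact (key_estimate H hHc hHp P u c hu φ h1 h2).1
  · refine le_csInf ⟨_, (fun _ => 0), contDiff_const, fun x z => rfl, rfl⟩ ?_
    rintro r ⟨φ, h1, h2, rfl⟩
    exact (key_estimate H hHc hHp P u c hu φ h1 h2).2
end
end

section
/- Estimates of the critical value for the non-coercive Hamiltonian: Let P ∈ D and let c ∈ ℝ be the critical value of the cell problem H(x, Du + P) = a on T^N. Then max{σ̲ m(|P|), σ̄ m₀} ≤ c ≤ σ̄ m(|P|) and c < σ̲. In particular, if σ̄ m₀ ≥ σ̲ then D = ∅. -/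
open Set Filter MeasureTheory

noncomputable section

/-! ### Auxiliary material -/

namespace CVE

variable {N : ℕ}

/-- The closed cube of side 1 centered at `a`. -/
def cube (a : Euc N) : Set (Euc N) :=
  (fun v : Fin N → ℝ => a + (EuclideanSpace.equiv (Fin N) ℝ).symm v) ''
    (Set.Icc (fun _ => -(1/2 : ℝ)) (fun _ => (1/2 : ℝ)))

lemma cube_compact (a : Euc N) : IsCompact (cube a) :=
  isCompact_Icc.image (continuous_const.add
    (EuclideanSpace.equiv (Fin N) ℝ).symm.continuous)

lemma mem_cube {a y : Euc N} : y ∈ cube a ↔ ∀ i, |y i - a i| ≤ 1/2 := by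
  constructor
  · rintro ⟨v, hv, rfl⟩ i
    have h1 : (a + (EuclideanSpace.equiv (Fin N) ℝ).symm v) i - a i = v i := by
      show a i + v i - a i = v i; ring
    rw [h1, abs_le]
    exact ⟨hv.1 i, hv.2 i⟩
  · intro h
    refine ⟨fun i => y i - a i, ⟨fun i => ?_, fun i => ?_⟩, ?_⟩
    · exact (abs_le.mp (h i)).1
    · exact (abs_le.mp (h i)).2
    · ext i
      show a i + (y i - a i) = y i
      ring

lemma self_mem_cube (a : Euc N) : a ∈ cube a := by
  rw [mem_cube]; intro i; simp

lemma exists_reduce (a y : Euc N) : ∃ z : Fin N → ℤ, y + intVec z ∈ cube a := by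
  refine ⟨fun i => round (a i - y i), ?_⟩
  rw [mem_cube]
  intro i
  have h1 : (y + intVec (fun i => round (a i - y i))) i - a i
      = -((a i - y i) - round (a i - y i)) := by
    show y i + ((round (a i - y i) : ℤ) : ℝ) - a i = _; ring
  rw [h1, abs_neg]
  exact abs_sub_round _

lemma periodic_exists_global_min (g : Euc N → ℝ) (hg : Continuous g)
    (hp : IsZPeriodic g) (a : Euc N) :
    ∃ x ∈ cube a, ∀ y, g x ≤ g y := by
  obtain ⟨x, hx, hmin⟩ := (cube_compact a).exists_isMinOn ⟨a, self_mem_cube a⟩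
    (hg.continuousOn)
  refine ⟨x, hx, fun y => ?_⟩
  obtain ⟨z, hz⟩ := exists_reduce a y
  calc g x ≤ g (y + intVec z) := isMinOn_iff.mp hmin _ hz
    _ = g y := hp y z

/-- The periodic bump function vanishing exactly at `a` (mod `ℤ^N`) on the cube. -/
def W (a : Euc N) (y : Euc N) : ℝ :=
  ∑ i, (1 - Real.cos (2 * Real.pi * (y i - a i)))

lemma W_nonneg (a y : Euc N) : 0 ≤ W a y :=
  Finset.sum_nonneg fun i _ => by
    have := Real.cos_le_one (2 * Real.pi * (y i - a i)); linarith

lemma W_self (a : Euc N) : W a a = 0 := by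
  unfold W; simp

lemma W_periodic (a : Euc N) (y : Euc N) (z : Fin N → ℤ) : W a (y + intVec z) = W a y := by
  unfold W
  refine Finset.sum_congr rfl fun i _ => ?_
  have h1 : (y + intVec z) i = y i + (z i : ℝ) := rfl
  rw [h1]
  have h2 : 2 * Real.pi * (y i + (z i : ℝ) - a i)
      = 2 * Real.pi * (y i - a i) + (z i : ℝ) * (2 * Real.pi) := by ring
  rw [h2, Real.cos_add_int_mul_two_pi]

lemma W_contDiff (a : Euc N) : ContDiff ℝ 1 (W a) := by
  unfold W
  refine ContDiff.sum fun i _ => ?_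
  refine contDiff_const.sub ?_
  exact (Real.contDiff_cos.of_le le_top).comp
    (contDiff_const.mul ((contDiff_piLp_apply 2).sub contDiff_const))

lemma W_eq_zero {a y : Euc N} (hy : y ∈ cube a) (h : W a y = 0) : y = a := by
  have hpi := Real.pi_pos
  have hterm : ∀ i ∈ Finset.univ, (1 - Real.cos (2 * Real.pi * (y i - a i))) = 0 := by
    refine (Finset.sum_eq_zero_iff_of_nonneg fun i _ => ?_).mp h
    have := Real.cos_le_one (2 * Real.pi * (y i - a i)); linarith
  ext i
  have hb := mem_cube.mp hy i
  have hcos : Real.cos (2 * Real.pi * (y i - a i)) = 1 := by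
    have := hterm i (Finset.mem_univ i); linarith
  have habs : |2 * Real.pi * (y i - a i)| ≤ Real.pi := by
    rw [abs_mul, abs_of_pos (by linarith : (0:ℝ) < 2 * Real.pi)]
    nlinarith [abs_nonneg (y i - a i)]
  have h0 : 2 * Real.pi * (y i - a i) = 0 := by
    refine (Real.cos_eq_one_iff_of_lt_of_lt ?_ ?_).mp hcos
    · have := abs_le.mp habs; linarith
    · have := abs_le.mp habs; linarith
  have : y i - a i = 0 := by
    rcases mul_eq_zero.mp h0 with h | h
    · linarith
    · exact h
  linarith

/-- Localization lemma: there is a global minimizer of `g + M ⬝ W a`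
at a point where `f` is `ε`-close to `f a`. -/
lemma loc (g f : Euc N → ℝ) (hg : Continuous g) (hgp : IsZPeriodic g)
    (hf : Continuous f) (a : Euc N) {ε : ℝ} (hε : 0 < ε) :
    ∃ (M : ℝ) (x : Euc N), 0 < M ∧
      (∀ y, g x + M * W a x ≤ g y + M * W a y) ∧ |f x - f a| < ε := by
  obtain ⟨r, hr0, hr⟩ := Metric.continuousAt_iff.mp hf.continuousAt ε hε
  set S : Set (Euc N) := cube a ∩ {y | r ≤ dist y a} with hS
  have hScompact : IsCompact S :=
    (cube_compact a).inter_right (isClosed_le continuous_const (continuous_id.dist continuous_const))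
  have hWpos : ∀ y ∈ S, 0 < W a y := by
    intro y hy
    rcases (W_nonneg a y).lt_or_eq with h | h
    · exact h
    · exfalso
      have : y = a := W_eq_zero hy.1 h.symm
      subst this
      have : r ≤ 0 := by simpa using hy.2
      linarith
  obtain ⟨δ, hδ0, hδ⟩ : ∃ δ : ℝ, 0 < δ ∧ ∀ y ∈ S, δ ≤ W a y := by
    rcases S.eq_empty_or_nonempty with h | h
    · exact ⟨1, one_pos, fun y hy => by rw [h] at hy; exact absurd hy (notMem_empty y)⟩
    · obtain ⟨y0, hy0, hmin⟩ := hScompact.exists_isMinOn h (W_contDiff a).continuous.continuousOn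
      exact ⟨W a y0, hWpos y0 hy0, fun y hy => isMinOn_iff.mp hmin y hy⟩
  obtain ⟨w, _, hwmin⟩ := periodic_exists_global_min g hg hgp a
  set C : ℝ := g a - g w with hC
  have hC0 : 0 ≤ C := by have := hwmin a; simp [hC]; linarith
  set M : ℝ := (C + 1) / δ with hM
  have hM0 : 0 < M := div_pos (by linarith) hδ0
  have hgM : Continuous (fun y => g y + M * W a y) :=
    hg.add (continuous_const.mul (W_contDiff a).continuous)
  have hgMp : IsZPeriodic (fun y => g y + M * W a y) := by
    intro y z; simp only [hgp y z, W_periodic a y z]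
  obtain ⟨x, hxcube, hxmin⟩ := periodic_exists_global_min _ hgM hgMp a
  refine ⟨M, x, hM0, hxmin, ?_⟩
  have hxa : g x + M * W a x ≤ g a := by
    have := hxmin a; rw [W_self] at this; linarith
  have hWx : M * W a x ≤ C := by
    have := hwmin x; simp only [hC]; linarith
  have hWlt : W a x < δ := by
    by_contra hcon
    push_neg at hcon
    have : M * δ ≤ M * W a x := by
      exact mul_le_mul_of_nonneg_left hcon (le_of_lt hM0)
    have hMδ : M * δ = C + 1 := by
      rw [hM]; field_simp
    linarith
  have hxS : x ∉ S := fun hx => absurd (hδ x hx) (by linarith)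
  have hdist : dist x a < r := by
    by_contra hcon
    push_neg at hcon
    exact hxS ⟨hxcube, hcon⟩
  have := hr hdist
  rwa [Real.dist_eq] at this

/-- If `φ y - φ x ≤ K ‖y - x‖` for all `y`, then `‖∇φ x‖ ≤ K`. -/
lemma grad_bound {φ : Euc N → ℝ} (hφ : ContDiff ℝ 1 φ) {x : Euc N} {K : ℝ} (hK : 0 ≤ K)
    (h : ∀ y, φ y - φ x ≤ K * ‖y - x‖) : ‖gradient φ x‖ ≤ K := by
  set g := gradient φ x with hg
  by_cases hg0 : g = 0
  · rw [hg0]; simpa using hK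
  have hgn : 0 < ‖g‖ := norm_pos_iff.mpr hg0
  have hline : HasDerivAt (fun t : ℝ => x + t • g) g 0 := by
    simpa using ((hasDerivAt_id (0:ℝ)).smul_const g).const_add x
  have hfd : HasFDerivAt φ (fderiv ℝ φ x) x := (hφ.differentiable one_ne_zero x).hasFDerivAt
  have hfd' : HasFDerivAt φ (fderiv ℝ φ x) ((fun t : ℝ => x + t • g) 0) := by
    simpa using hfd
  have hd : HasDerivAt (fun t : ℝ => φ (x + t • g)) (fderiv ℝ φ x g) 0 :=
    hfd'.comp_hasDerivAt 0 hline
  have hinner : (inner ℝ g g : ℝ) = fderiv ℝ φ x g := by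
    rw [hg, gradient]; exact InnerProductSpace.toDual_symm_apply
  have hval : (inner ℝ g g : ℝ) = ‖g‖^2 := real_inner_self_eq_norm_sq g
  have hslope := hasDerivAt_iff_tendsto_slope.mp hd
  have hsub : nhdsWithin (0:ℝ) (Set.Ioi 0) ≤ nhdsWithin (0:ℝ) {(0:ℝ)}ᶜ := by
    apply nhdsWithin_mono
    intro t ht
    exact ne_of_gt ht
  have hslope' : Tendsto (slope (fun t : ℝ => φ (x + t • g)) 0)
      (nhdsWithin (0:ℝ) (Set.Ioi 0)) (nhds (fderiv ℝ φ x g)) :=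
    hslope.mono_left hsub
  have hbound : ∀ᶠ t in nhdsWithin (0:ℝ) (Set.Ioi 0),
      slope (fun t : ℝ => φ (x + t • g)) 0 t ≤ K * ‖g‖ := by
    filter_upwards [self_mem_nhdsWithin] with t ht
    have ht0 : (0:ℝ) < t := ht
    have h1 := h (x + t • g)
    have hnorm : ‖x + t • g - x‖ = t * ‖g‖ := by
      rw [add_sub_cancel_left, norm_smul, Real.norm_eq_abs, abs_of_pos ht0]
    rw [hnorm] at h1
    have h2 : slope (fun t : ℝ => φ (x + t • g)) 0 t
        = (φ (x + t • g) - φ x) / t := by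
      rw [slope_def_field]
      simp
    rw [h2, div_le_iff₀ ht0]
    calc φ (x + t • g) - φ x ≤ K * (t * ‖g‖) := h1
      _ = K * ‖g‖ * t := by ring
  have hfin : fderiv ℝ φ x g ≤ K * ‖g‖ :=
    le_of_tendsto hslope' hbound
  rw [← hinner, hval] at hfin
  nlinarith [hgn]

end CVE

open CVE in
/-- Estimates of the critical value for the non-coercive
Hamiltonian `H(x,p) = σ(x) m(|p|)`, and emptiness of the solvability set
when `σ̄ m₀ ≥ σ̲`. -/
theorem critical_value_estimates_noncoercive {N : ℕ} (hN : 1 ≤ N)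
    (σ : Euc N → ℝ) (m : ℝ → ℝ) (L : NNReal)
    (hσc : Continuous σ) (hσp : IsZPeriodic σ) (hσpos : ∀ x, 0 < σ x)
    (hm01 : ∀ r : ℝ, 0 ≤ r → 0 < m r ∧ m r < 1)
    (hmLip : LipschitzOnWith L m (Set.Ici 0))
    (hmmono : StrictMonoOn m (Set.Ici 0))
    (hmlim : Tendsto m atTop (nhds 1))
    (σmax σmin : ℝ)
    (hσmax : IsGreatest (Set.range σ) σmax) (hσmin : IsLeast (Set.range σ) σmin) :
    (∀ (P : Euc N) (u : Euc N → ℝ) (c : ℝ),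
        IsCellSolution (fun x p => σ x * m ‖p‖) P u c →
        max (σmin * m ‖P‖) (σmax * m 0) ≤ c ∧ c ≤ σmax * m ‖P‖ ∧ c < σmin) ∧
    (σmin ≤ σmax * m 0 →
        { P : Euc N | ∃ (u : Euc N → ℝ) (a : ℝ),
            IsCellSolution (fun x p => σ x * m ‖p‖) P u a } = ∅) := by
  have hmono' : MonotoneOn m (Set.Ici 0) := hmmono.monotoneOn
  have hσmaxpos : 0 < σmax := by
    obtain ⟨x0, hx0⟩ := hσmax.1
    exact hx0 ▸ hσpos x0
  have hσminpos : 0 < σmin := by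
    obtain ⟨x0, hx0⟩ := hσmin.1
    exact hx0 ▸ hσpos x0
  have hσle : ∀ x, σ x ≤ σmax := fun x => hσmax.2 ⟨x, rfl⟩
  have hσge : ∀ x, σmin ≤ σ x := fun x => hσmin.2 ⟨x, rfl⟩
  have hm0pos : 0 < m 0 := (hm01 0 le_rfl).1
  have main : ∀ (P : Euc N) (u : Euc N → ℝ) (c : ℝ),
      IsCellSolution (fun x p => σ x * m ‖p‖) P u c →
      max (σmin * m ‖P‖) (σmax * m 0) ≤ c ∧ c ≤ σmax * m ‖P‖ ∧ c < σmin := by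
    intro P u c hsol
    obtain ⟨⟨K, hKlip⟩, hup, hsub, hsup⟩ := hsol
    have huc : Continuous u := hKlip.continuous
    have hmPpos : 0 < m ‖P‖ := (hm01 _ (norm_nonneg P)).1
    -- zero is in superDiff at a global max of u, and in subDiff at a global min
    obtain ⟨xmin, _, hxmin⟩ := periodic_exists_global_min u huc hup 0
    obtain ⟨xmax, _, hxmax⟩ := periodic_exists_global_min (fun y => -u y)
      huc.neg (fun y z => by simp [hup y z]) 0
    have hzero_sub : (0 : Euc N) ∈ subDiff u xmin := by
      refine ⟨fun _ => 0, contDiff_const, fun y z => rfl, fun y => by simpa using hxmin y, ?_⟩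
      rw [gradient_fun_const]
    have hzero_super : (0 : Euc N) ∈ superDiff u xmax := by
      refine ⟨fun _ => 0, contDiff_const, fun y z => rfl, fun y => ?_, ?_⟩
      · have := hxmax y; simp only [neg_le_neg_iff] at this; simpa using this
      · rw [gradient_fun_const]
    -- bound 1 : σmin * m ‖P‖ ≤ c
    have hb1 : σmin * m ‖P‖ ≤ c := by
      have := hsub xmax 0 hzero_super
      simp only [zero_add] at this
      calc σmin * m ‖P‖ ≤ σ xmax * m ‖P‖ :=
        mul_le_mul_of_nonneg_right (hσge xmax) (le_of_lt hmPpos)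
        _ ≤ c := this
    -- bound 2 : c ≤ σmax * m ‖P‖
    have hb2 : c ≤ σmax * m ‖P‖ := by
      have := hsup xmin 0 hzero_sub
      simp only [zero_add] at this
      calc c ≤ σ xmin * m ‖P‖ := this
        _ ≤ σmax * m ‖P‖ :=
        mul_le_mul_of_nonneg_right (hσle xmin) (le_of_lt hmPpos)
    -- bound 3 : σmax * m 0 ≤ c
    obtain ⟨amax, hamax⟩ := hσmax.1
    have hb3 : σmax * m 0 ≤ c := by
      have key : ∀ ε : ℝ, 0 < ε → σmax * m 0 ≤ c + ε * m 0 := by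
        intro ε hε
        obtain ⟨M, x, hM0, hxmin', hclose⟩ := loc (fun y => -u y) σ huc.neg
          (fun y z => by simp [hup y z]) hσc amax hε
        set φ : Euc N → ℝ := fun y => M * W amax y with hφ
        have hq : gradient φ x ∈ superDiff u x := by
          refine ⟨φ, contDiff_const.mul (W_contDiff amax), ?_, ?_, rfl⟩
          · intro y z; simp only [hφ, W_periodic]
          · intro y
            have h1 := hxmin' y
            simp only [hφ]
            linarith
        have h2 : σ x * m ‖gradient φ x + P‖ ≤ c := hsub x _ hq
        have h3 : m 0 ≤ m ‖gradient φ x + P‖ :=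
          hmono' Set.self_mem_Ici (norm_nonneg _) (norm_nonneg _)
        have h4 : σ x * m 0 ≤ σ x * m ‖gradient φ x + P‖ :=
          mul_le_mul_of_nonneg_left h3 (le_of_lt (hσpos x))
        have h5 : σmax - ε ≤ σ x := by
          have := abs_lt.mp hclose
          rw [hamax] at *
          linarith [this.1]
        have h6 : (σmax - ε) * m 0 ≤ σ x * m 0 :=
          mul_le_mul_of_nonneg_right h5 (le_of_lt hm0pos)
        have h7 : (σmax - ε) * m 0 = σmax * m 0 - ε * m 0 := by ring
        linarith
      by_contra hcon
      push_neg at hcon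
      have hε : 0 < (σmax * m 0 - c) / (2 * m 0) :=
        div_pos (by linarith) (by positivity)
      have := key _ hε
      have h6 : (σmax * m 0 - c) / (2 * m 0) * m 0 = (σmax * m 0 - c) / 2 := by
        field_simp
      rw [h6] at this
      linarith
    -- bound 4 : c < σmin
    obtain ⟨amin, hamin⟩ := hσmin.1
    have hmbar : m ((K:ℝ) + ‖P‖) < 1 := (hm01 _ (by positivity)).2
    have hmbarpos : 0 < m ((K:ℝ) + ‖P‖) := (hm01 _ (by positivity)).1
    have hb4 : c < σmin := by
      have key : ∀ ε : ℝ, 0 < ε → c ≤ (σmin + ε) * m ((K:ℝ) + ‖P‖) := by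
        intro ε hε
        obtain ⟨M, x, hM0, hxmin', hclose⟩ := loc u σ huc hup hσc amin hε
        set φ : Euc N → ℝ := fun y => (-M) * W amin y with hφ
        have hmincond : ∀ y, u x - φ x ≤ u y - φ y := by
          intro y
          have h1 := hxmin' y
          simp only [hφ]
          linarith
        have hq : gradient φ x ∈ subDiff u x :=
          ⟨φ, contDiff_const.mul (W_contDiff amin),
            fun y z => by simp only [hφ, W_periodic], hmincond, rfl⟩
        have hgb : ‖gradient φ x‖ ≤ (K:ℝ) := by
          refine grad_bound (contDiff_const.mul (W_contDiff amin)) K.coe_nonneg ?_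
          intro y
          have h1 : u x - (-M) * W amin x ≤ u y - (-M) * W amin y := hmincond y
          have h2 : |u y - u x| ≤ (K:ℝ) * ‖y - x‖ := by
            have := hKlip.dist_le_mul y x
            rwa [Real.dist_eq, dist_eq_norm] at this
          have := abs_le.mp h2
          linarith [this.2]
        have h2 : c ≤ σ x * m ‖gradient φ x + P‖ := hsup x _ hq
        have h3 : m ‖gradient φ x + P‖ ≤ m ((K:ℝ) + ‖P‖) := by
          refine hmono' (norm_nonneg _) (Set.mem_Ici.mpr (by positivity)) ?_
          calc ‖gradient φ x + P‖ ≤ ‖gradient φ x‖ + ‖P‖ := norm_add_le _ _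
            _ ≤ (K:ℝ) + ‖P‖ := by linarith
        have h5 : σ x ≤ σmin + ε := by
          have := abs_lt.mp hclose
          rw [hamin] at *
          linarith [this.2]
        have hc1 : σ x * m ‖gradient φ x + P‖ ≤ σ x * m ((K:ℝ) + ‖P‖) :=
          mul_le_mul_of_nonneg_left h3 (le_of_lt (hσpos x))
        have hc2 : σ x * m ((K:ℝ) + ‖P‖) ≤ (σmin + ε) * m ((K:ℝ) + ‖P‖) :=
          mul_le_mul_of_nonneg_right h5 (le_of_lt hmbarpos)
        linarith
      have hle : c ≤ σmin * m ((K:ℝ) + ‖P‖) := by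
        by_contra hcon
        push_neg at hcon
        have hε : 0 < (c - σmin * m ((K:ℝ) + ‖P‖)) / (2 * m ((K:ℝ) + ‖P‖)) :=
          div_pos (by linarith) (by positivity)
        have := key _ hε
        have h6 : (σmin + (c - σmin * m ((K:ℝ) + ‖P‖)) / (2 * m ((K:ℝ) + ‖P‖)))
            * m ((K:ℝ) + ‖P‖)
            = σmin * m ((K:ℝ) + ‖P‖) + (c - σmin * m ((K:ℝ) + ‖P‖)) / 2 := by
          field_simp
        rw [h6] at this
        linarith
      calc c ≤ σmin * m ((K:ℝ) + ‖P‖) := hle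
        _ < σmin * 1 := by
          exact mul_lt_mul_of_pos_left hmbar hσminpos
        _ = σmin := mul_one σmin
    exact ⟨max_le hb1 hb3, hb2, hb4⟩
  refine ⟨main, fun hge => ?_⟩
  rw [Set.eq_empty_iff_forall_notMem]
  rintro P ⟨u, a, hsol⟩
  obtain ⟨h1, _, h3⟩ := main P u a hsol
  have h4 : σmax * m 0 ≤ a := le_trans (le_max_right _ _) h1
  linarith
end
end

section
/- Strict monotonicity of the critical value in one dimension: Let N = 1 and assume σ̄ m₀ < σ̲. For all P, Q ∈ D with |P| > |Q| ≥ ∫₀¹ f_{σ̄ m₀}(z) dz, the corresponding critical values satisfy c(P) > c(Q), where c(P) denotes the critical value of the cell problem H(x, u' + P) = a on T. -/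
open Set Filter MeasureTheory

noncomputable section

def IsZPeriodic1 (u : ℝ → ℝ) : Prop :=
  ∀ (x : ℝ) (z : ℤ), u (x + z) = u x

def superDiff1 (u : ℝ → ℝ) (x : ℝ) : Set ℝ :=
  { q | ∃ φ : ℝ → ℝ, ContDiff ℝ 1 φ ∧ IsZPeriodic1 φ ∧
        (∀ y, u y - φ y ≤ u x - φ x) ∧ q = deriv φ x }

def subDiff1 (u : ℝ → ℝ) (x : ℝ) : Set ℝ :=
  { q | ∃ φ : ℝ → ℝ, ContDiff ℝ 1 φ ∧ IsZPeriodic1 φ ∧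
        (∀ y, u x - φ x ≤ u y - φ y) ∧ q = deriv φ x }

def IsCellSubsolution1 (H : ℝ → ℝ → ℝ) (P : ℝ) (a : ℝ) (u : ℝ → ℝ) : Prop :=
  ∀ x, ∀ q ∈ superDiff1 u x, H x (q + P) ≤ a

def IsCellSupersolution1 (H : ℝ → ℝ → ℝ) (P : ℝ) (a : ℝ) (u : ℝ → ℝ) : Prop :=
  ∀ x, ∀ q ∈ subDiff1 u x, a ≤ H x (q + P)

def IsCellSolution1 (H : ℝ → ℝ → ℝ) (P : ℝ) (u : ℝ → ℝ) (a : ℝ) : Prop :=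
  (∃ K : NNReal, LipschitzWith K u) ∧ IsZPeriodic1 u ∧
    IsCellSubsolution1 H P a u ∧ IsCellSupersolution1 H P a u

set_option maxHeartbeats 1000000

lemma isZPeriodic1_of_periodic {u : ℝ → ℝ} (h : Function.Periodic u 1) : IsZPeriodic1 u :=
  fun x z => by simpa using (h.int_mul z) x

lemma IsZPeriodic1.periodic {u : ℝ → ℝ} (h : IsZPeriodic1 u) : Function.Periodic u 1 :=
  fun x => by simpa using h x 1

lemma exists_global_max_s16 {w : ℝ → ℝ} (hc : Continuous w) (hp : IsZPeriodic1 w) :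
    ∃ x, ∀ y, w y ≤ w x := by
  obtain ⟨x, -, hx⟩ := isCompact_Icc.exists_isMaxOn (s := Icc (0:ℝ) 1)
    (nonempty_Icc.mpr zero_le_one) hc.continuousOn
  refine ⟨x, fun y => ?_⟩
  have h1 : w y = w (Int.fract y) := by
    have := hp (Int.fract y) ⌊y⌋
    rwa [Int.fract_add_floor] at this
  rw [h1]
  exact hx ⟨Int.fract_nonneg y, (Int.fract_lt_one y).le⟩

lemma exists_global_min {w : ℝ → ℝ} (hc : Continuous w) (hp : IsZPeriodic1 w) :
    ∃ x, ∀ y, w x ≤ w y := by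
  obtain ⟨x, hx⟩ := exists_global_max_s16 (w := fun t => -w t) hc.neg (fun t z => by simp [hp t z])
  exact ⟨x, fun y => by have := hx y; simpa using this⟩

section mInvSec

variable (m : ℝ → ℝ)

def mInv (t : ℝ) : ℝ := sInf {r : ℝ | 0 ≤ r ∧ t ≤ m r}

variable {m}
variable (hm01 : ∀ r : ℝ, 0 ≤ r → 0 < m r ∧ m r < 1)
    (hmc : ContinuousOn m (Set.Ici 0))
    (hmmono : StrictMonoOn m (Set.Ici 0))
    (hmlim : Tendsto m atTop (nhds 1))

include hm01 hmc hmmono hmlim in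
lemma mInv_spec {t : ℝ} (h0 : m 0 ≤ t) (h1 : t < 1) :
    0 ≤ mInv m t ∧ m (mInv m t) = t := by
  set S := {r : ℝ | 0 ≤ r ∧ t ≤ m r} with hS
  have hSclosed : IsClosed S := by
    have : S = Ici 0 ∩ m ⁻¹' (Ici t) := by
      ext r
      simp only [hS, mem_setOf_eq, mem_inter_iff, mem_Ici, mem_preimage]
    rw [this]
    exact hmc.preimage_isClosed_of_isClosed isClosed_Ici isClosed_Ici
  have hSne : S.Nonempty := by
    obtain ⟨R, hR⟩ := ((hmlim.eventually (eventually_ge_nhds h1)).and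
      (eventually_ge_atTop (0:ℝ))).exists
    exact ⟨R, hR.2, hR.1⟩
  have hSbdd : BddBelow S := ⟨0, fun r hr => hr.1⟩
  have hmem : mInv m t ∈ S := hSclosed.csInf_mem hSne hSbdd
  refine ⟨hmem.1, le_antisymm ?_ hmem.2⟩
  by_contra hlt
  push_neg at hlt
  -- t < m (mInv m t); find smaller element of S
  set r₀ := mInv m t with hr₀
  have hr₀pos : 0 < r₀ := by
    rcases lt_or_eq_of_le hmem.1 with h | h
    · exact h
    · exfalso; rw [← h] at hlt; exact absurd h0 (not_le.mpr hlt)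
  have hcont : ContinuousWithinAt m (Ici 0) r₀ := hmc r₀ hmem.1
  have : ∀ᶠ r in nhdsWithin r₀ (Ici 0), t < m r := hcont.eventually_const_lt hlt
  rw [nhdsWithin_eq_nhds.mpr (Ici_mem_nhds hr₀pos)] at this
  obtain ⟨δ, hδpos, hδ⟩ := Metric.eventually_nhds_iff.mp this
  set r' := r₀ - min (δ/2) (r₀/2) with hr'
  have hminpos : 0 < min (δ/2) (r₀/2) := lt_min (by linarith) (by linarith)
  have h1' : r' < r₀ := sub_lt_self r₀ hminpos
  have h2' : 0 ≤ r' := by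
    have : min (δ/2) (r₀/2) ≤ r₀/2 := min_le_right _ _
    simp only [hr']; linarith
  have h3' : dist r' r₀ < δ := by
    rw [Real.dist_eq, hr']
    have h4 : min (δ/2) (r₀/2) ≤ δ/2 := min_le_left _ _
    have h5 : 0 < min (δ/2) (r₀/2) := lt_min (by linarith) (by linarith)
    rw [abs_of_nonpos (by linarith)]
    linarith
  have : r' ∈ S := ⟨h2', (hδ h3').le⟩
  exact absurd (csInf_le hSbdd this) (not_le.mpr h1')

include hm01 hmc hmmono hmlim in
lemma mInv_m {r : ℝ} (hr : 0 ≤ r) : mInv m (m r) = r := by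
  have h1 : m 0 ≤ m r := (hmmono.monotoneOn) (self_mem_Ici) hr hr
  have h2 : m r < 1 := (hm01 r hr).2
  obtain ⟨ha, hb⟩ := mInv_spec hm01 hmc hmmono hmlim h1 h2
  exact hmmono.injOn ha hr hb

include hm01 hmc hmmono hmlim in
lemma mInv_continuousOn {T : ℝ} (hT0 : 0 ≤ T) :
    ContinuousOn (mInv m) (Icc (m 0) (m T)) := by
  rw [Metric.continuousOn_iff]
  rintro t ⟨ht0, htT⟩ ε hε
  have ht1 : t < 1 := lt_of_le_of_lt htT (hm01 T hT0).2
  obtain ⟨hr0, hrm⟩ := mInv_spec hm01 hmc hmmono hmlim ht0 ht1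
  set r := mInv m t
  have hδ₁pos : 0 < m (r + ε) - t := by
    have := hmmono (mem_Ici.mpr hr0) (mem_Ici.mpr (by linarith : (0:ℝ) ≤ r + ε))
      (by linarith : r < r + ε)
    linarith
  have key : ∀ t' : ℝ, m 0 ≤ t' → t' ≤ m T → t' - t < m (r + ε) - t →
      mInv m t' < r + ε := by
    intro t' ht'0 ht'T hd
    have ht'1 : t' < 1 := lt_of_le_of_lt ht'T (hm01 T hT0).2
    obtain ⟨hr'0, hr'm⟩ := mInv_spec hm01 hmc hmmono hmlim ht'0 ht'1
    have h1 : m (mInv m t') < m (r + ε) := by rw [hr'm]; linarith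
    exact (hmmono.lt_iff_lt (mem_Ici.mpr hr'0) (mem_Ici.mpr (by linarith))).mp h1
  by_cases hcase : ε ≤ r
  · have hlo : m (r - ε) < t := by
      rw [← hrm]
      exact hmmono (mem_Ici.mpr (by linarith)) (mem_Ici.mpr hr0) (by linarith)
    refine ⟨min (m (r + ε) - t) (t - m (r - ε)), lt_min hδ₁pos (by linarith), ?_⟩
    rintro t' ⟨ht'0, ht'T⟩ hd
    rw [Real.dist_eq] at hd ⊢
    have hd1 : t' - t < m (r + ε) - t :=
      lt_of_le_of_lt (le_abs_self _) (lt_of_lt_of_le hd (min_le_left _ _))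
    have hd2 : t - t' < t - m (r - ε) := by
      have := lt_of_le_of_lt (neg_le_abs (t' - t)) (lt_of_lt_of_le hd (min_le_right _ _))
      linarith
    have ht'1 : t' < 1 := lt_of_le_of_lt ht'T (hm01 T hT0).2
    obtain ⟨hr'0, hr'm⟩ := mInv_spec hm01 hmc hmmono hmlim ht'0 ht'1
    have hub : mInv m t' < r + ε := key t' ht'0 ht'T hd1
    have hlb : r - ε < mInv m t' := by
      have h1 : m (r - ε) < m (mInv m t') := by rw [hr'm]; linarith
      exact (hmmono.lt_iff_lt (mem_Ici.mpr (by linarith)) (mem_Ici.mpr hr'0)).mp h1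
    rw [abs_sub_lt_iff]; constructor <;> linarith
  · push_neg at hcase
    refine ⟨m (r + ε) - t, hδ₁pos, ?_⟩
    rintro t' ⟨ht'0, ht'T⟩ hd
    rw [Real.dist_eq] at hd ⊢
    have hd1 : t' - t < m (r + ε) - t := lt_of_le_of_lt (le_abs_self _) hd
    have ht'1 : t' < 1 := lt_of_le_of_lt ht'T (hm01 T hT0).2
    obtain ⟨hr'0, hr'm⟩ := mInv_spec hm01 hmc hmmono hmlim ht'0 ht'1
    have hub : mInv m t' < r + ε := key t' ht'0 ht'T hd1
    rw [abs_sub_lt_iff]; constructor <;> linarith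

include hm01 hmc hmmono hmlim in
lemma mInv_mono {t₁ t₂ : ℝ} (h0 : m 0 ≤ t₁) (h12 : t₁ ≤ t₂) (h1 : t₂ < 1) :
    mInv m t₁ ≤ mInv m t₂ := by
  obtain ⟨ha, hb⟩ := mInv_spec hm01 hmc hmmono hmlim (le_trans h0 h12) h1
  exact csInf_le ⟨0, fun r hr => hr.1⟩ ⟨ha, by rw [hb]; exact h12⟩

lemma mInv_of_le {t : ℝ} (h : t ≤ m 0) : mInv m t = 0 := by
  apply le_antisymm
  · exact csInf_le ⟨0, fun r hr => hr.1⟩ ⟨le_refl 0, h⟩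
  · exact le_csInf ⟨0, le_refl 0, h⟩ (fun r hr => hr.1)

end mInvSec

set_option linter.unusedSectionVars false
set_option maxHeartbeats 1000000

lemma buildTest (ψ : ℝ → ℝ) (hc : Continuous ψ) (hp : Function.Periodic ψ 1)
    (hz : ∫ t in (0:ℝ)..1, ψ t = 0) :
    ContDiff ℝ 1 (fun x => ∫ t in (0:ℝ)..x, ψ t) ∧
    IsZPeriodic1 (fun x => ∫ t in (0:ℝ)..x, ψ t) ∧
    (∀ x, deriv (fun x => ∫ t in (0:ℝ)..x, ψ t) x = ψ x) ∧
    (∀ x y, (∫ t in (0:ℝ)..y, ψ t) - (∫ t in (0:ℝ)..x, ψ t) = ∫ t in x..y, ψ t) := by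
  have hint : ∀ t₁ t₂ : ℝ, IntervalIntegrable ψ MeasureSpace.volume t₁ t₂ :=
    fun t₁ t₂ => hc.intervalIntegrable t₁ t₂
  have hsub : ∀ x y : ℝ, (∫ t in (0:ℝ)..y, ψ t) - (∫ t in (0:ℝ)..x, ψ t) = ∫ t in x..y, ψ t := by
    intro x y
    rw [← intervalIntegral.integral_add_adjacent_intervals (hint 0 x) (hint x y)]
    ring
  have hderiv : ∀ x, HasDerivAt (fun x => ∫ t in (0:ℝ)..x, ψ t) (ψ x) x := by
    intro x
    exact intervalIntegral.integral_hasDerivAt_right (hint 0 x)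
      hc.aestronglyMeasurable.stronglyMeasurableAtFilter hc.continuousAt
  refine ⟨?_, ?_, fun x => (hderiv x).deriv, hsub⟩
  · rw [contDiff_one_iff_deriv]
    refine ⟨fun x => (hderiv x).differentiableAt, ?_⟩
    have : deriv (fun x => ∫ t in (0:ℝ)..x, ψ t) = ψ := funext fun x => (hderiv x).deriv
    rw [this]; exact hc
  · intro x z
    have h1 : (∫ t in (0:ℝ)..(x + z), ψ t) - (∫ t in (0:ℝ)..x, ψ t) = ∫ t in x..(x+z), ψ t :=
      hsub x (x + z)
    have h2 := hp.intervalIntegral_add_zsmul_eq z x hint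
    have h3 : (∫ t in x..(x+1), ψ t) = ∫ t in (0:ℝ)..(0+1), ψ t :=
      hp.intervalIntegral_add_eq x 0
    simp only [zsmul_eq_mul, smul_eq_mul, mul_one, zero_add] at h2 h3
    rw [h3, hz, mul_zero] at h2
    rw [h2] at h1
    linarith [h1]

lemma supersol_le_sigmamin
    (σ m : ℝ → ℝ) (hσc : Continuous σ) (hσp : IsZPeriodic1 σ) (hσpos : ∀ x, 0 < σ x)
    (hm01 : ∀ r : ℝ, 0 ≤ r → 0 < m r ∧ m r < 1)
    (σmin : ℝ) (hσmin : σmin ∈ Set.range σ)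
    (P c : ℝ) (u : ℝ → ℝ) (hu : Continuous u) (hup : IsZPeriodic1 u)
    (hsup : IsCellSupersolution1 (fun x p => σ x * m |p|) P c u) :
    c ≤ σmin := by
  by_contra hgt; push_neg at hgt
  obtain ⟨y₀, hy₀⟩ := hσmin
  have hev : ∀ᶠ y in nhds y₀, σ y < c := by
    have : Tendsto σ (nhds y₀) (nhds σmin) := by rw [← hy₀]; exact hσc.continuousAt
    exact this.eventually_lt_const hgt
  obtain ⟨δ₀, hδ₀pos, hδ₀⟩ := Metric.eventually_nhds_iff.mp hev
  set δ : ℝ := min (δ₀ / 2) (1 / 4) with hδdef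
  have hδpos : 0 < δ := lt_min (by linarith) (by norm_num)
  have hδle : δ ≤ 1 / 4 := min_le_right _ _
  have hπ := Real.pi_pos
  -- max/min of u
  obtain ⟨xM, hxM⟩ := exists_global_max_s16 hu hup
  obtain ⟨xm, hxm⟩ := exists_global_min hu hup
  set B : ℝ := u xM - u xm with hBdef
  have hB0 : 0 ≤ B := by have := hxM xm; simp [hBdef]; linarith
  set cδ : ℝ := Real.cos (2 * Real.pi * δ) with hcδdef
  have hmemδ : 2 * Real.pi * δ ∈ Icc 0 Real.pi := by
    constructor
    · positivity
    · nlinarith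
  have hcδlt : cδ < 1 := by
    have := Real.strictAntiOn_cos (left_mem_Icc.mpr Real.pi_nonneg) hmemδ
      (by positivity : (0:ℝ) < 2 * Real.pi * δ)
    simpa [Real.cos_zero] using this
  set K : ℝ := (B + 1) / (1 - cδ) with hKdef
  have hKpos : 0 < K := div_pos (by linarith) (by linarith)
  have hK1 : K * (1 - cδ) = B + 1 := by
    rw [hKdef]
    exact div_mul_cancel₀ _ (by linarith : (1:ℝ) - cδ ≠ 0)
  set φ : ℝ → ℝ := fun y => K * Real.cos (2 * Real.pi * (y - y₀)) with hφdef
  have hφC : ContDiff ℝ 1 φ :=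
    contDiff_const.mul (((Real.contDiff_cos).of_le le_top).comp
      (contDiff_const.mul (contDiff_id.sub contDiff_const)))
  have hφper : IsZPeriodic1 φ := by
    intro x z
    have : 2 * Real.pi * (x + z - y₀) = 2 * Real.pi * (x - y₀) + z * (2 * Real.pi) := by ring
    simp only [hφdef, this, Real.cos_add_int_mul_two_pi]
  obtain ⟨xh, hxh⟩ := exists_global_min (hu.sub (hφC.continuous)) (fun x z => by
    simp [hup x z, hφper x z])
  have hq : deriv φ xh ∈ subDiff1 u xh :=
    ⟨φ, hφC, hφper, fun y => hxh y, rfl⟩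
  have hsupx := hsup xh _ hq
  have hm1 : m |deriv φ xh + P| < 1 := (hm01 _ (abs_nonneg _)).2
  have hclt : c < σ xh := by
    have h1 : σ xh * m |deriv φ xh + P| < σ xh * 1 := by
      have := hσpos xh
      exact mul_lt_mul_of_pos_left hm1 this
    simpa using lt_of_le_of_lt hsupx h1
  -- localize xh near y₀ mod 1
  have hmin := hxh y₀
  have hcosy₀ : φ y₀ = K := by simp [hφdef]
  set θ : ℝ := 2 * Real.pi * (xh - y₀) with hθdef
  have hKθ : K * (1 - Real.cos θ) ≤ B := by
    have h1 : u xh - φ xh ≤ u y₀ - K := by rw [← hcosy₀]; exact hmin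
    have h2 : u y₀ - u xh ≤ B := by
      have := hxM y₀; have := hxm xh; simp [hBdef]; linarith
    have : φ xh = K * Real.cos θ := rfl
    nlinarith
  have hcosθ : cδ < Real.cos θ := by
    nlinarith
  set n : ℤ := round (xh - y₀) with hndef
  set d : ℝ := xh - y₀ - n with hddef
  have hdle : |d| ≤ 1 / 2 := by
    rw [hddef]; exact (abs_sub_round (xh - y₀))
  have hcosd : Real.cos (2 * Real.pi * d) = Real.cos θ := by
    have : θ = 2 * Real.pi * d + n * (2 * Real.pi) := by rw [hθdef, hddef]; ring
    rw [this, Real.cos_add_int_mul_two_pi]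
  have hdlt : |d| < δ := by
    by_contra hcon; push_neg at hcon
    have h2 : Real.cos |2 * Real.pi * d| ≤ cδ := by
      have hmemd : |2 * Real.pi * d| ∈ Icc 0 Real.pi := by
        constructor
        · positivity
        · rw [abs_mul, abs_of_nonneg (by positivity : (0:ℝ) ≤ 2 * Real.pi)]
          nlinarith [hdle]
      have harg : 2 * Real.pi * δ ≤ |2 * Real.pi * d| := by
        rw [abs_mul, abs_of_nonneg (by positivity : (0:ℝ) ≤ 2 * Real.pi)]
        nlinarith [hcon]
      rcases eq_or_lt_of_le harg with h | h
      · rw [← h]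
      · exact le_of_lt (Real.strictAntiOn_cos hmemδ hmemd h)
    rw [Real.cos_abs, hcosd] at h2
    linarith
  have hσnear : σ (xh - n) < c := by
    apply hδ₀
    rw [Real.dist_eq]
    have : xh - n - y₀ = d := by rw [hddef]; ring
    rw [this]
    have : δ ≤ δ₀ / 2 := min_le_left _ _
    linarith [hdlt]
  have hσeq : σ xh = σ (xh - n) := by
    have := hσp (xh - n) n
    simp at this
    rw [← this]
  linarith [hclt, hσnear, hσeq.ge]

lemma subsol_push
    (σ m : ℝ → ℝ)
    (hσc : Continuous σ) (hσp : IsZPeriodic1 σ) (hσpos : ∀ x, 0 < σ x)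
    (hm01 : ∀ r : ℝ, 0 ≤ r → 0 < m r ∧ m r < 1)
    (hmc : ContinuousOn m (Set.Ici 0))
    (hmmono : StrictMonoOn m (Set.Ici 0))
    (hmlim : Tendsto m atTop (nhds 1))
    (σmax σmin : ℝ)
    (hσmax : IsGreatest (Set.range σ) σmax) (hσmin : IsLeast (Set.range σ) σmin)
    (f : ℝ → ℝ → ENNReal)
    (hf : ∀ a : ℝ, σmax * m 0 ≤ a → a ≤ σmin → ∀ x : ℝ,
        (σ x = a → f a x = ⊤) ∧
        (σ x ≠ a → ∃ r : ℝ, 0 ≤ r ∧ m r = a / σ x ∧ f a x = ENNReal.ofReal r))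
    (a : ℝ) (ha0 : σmax * m 0 ≤ a) (ha1 : a ≤ σmin)
    (P c : ℝ) (u : ℝ → ℝ) (K : NNReal) (hK : LipschitzWith K u) (hup : IsZPeriodic1 u)
    (hsub : IsCellSubsolution1 (fun x p => σ x * m |p|) P c u)
    (hca : c ≤ a)
    (hFa : ∫⁻ z in Set.Ioc (0:ℝ) 1, f a z < ENNReal.ofReal |P|) : False := by
  -- basic facts
  have hσle : ∀ x, σmin ≤ σ x := fun x => hσmin.2 (mem_range_self x)
  have hσge : ∀ x, σ x ≤ σmax := fun x => hσmax.2 (mem_range_self x)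
  obtain ⟨y₁, hy₁⟩ := hσmax.1
  have hσmaxpos : 0 < σmax := hy₁ ▸ hσpos y₁
  obtain ⟨y₂, hy₂⟩ := hσmin.1
  have hσminpos : 0 < σmin := hy₂ ▸ hσpos y₂
  have hm0pos : 0 < m 0 := (hm01 0 le_rfl).1
  have hapos : 0 < a := lt_of_lt_of_le (mul_pos hσmaxpos hm0pos) ha0
  have hrat_lb : ∀ x, m 0 ≤ a / σ x := by
    intro x
    rw [le_div_iff₀ (hσpos x)]
    calc m 0 * σ x ≤ m 0 * σmax := by
          exact mul_le_mul_of_nonneg_left (hσge x) hm0pos.le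
      _ = σmax * m 0 := by ring
      _ ≤ a := ha0
  have hrat_ub : ∀ x, a / σ x ≤ 1 := fun x =>
    div_le_one_of_le₀ (le_trans ha1 (hσle x)) (hσpos x).le
  have hrat_lt1 : ∀ x, σ x ≠ a → a / σ x < 1 := by
    intro x hne
    rw [div_lt_one (hσpos x)]
    rcases lt_or_eq_of_le (le_trans ha1 (hσle x)) with h | h
    · exact h
    · exact absurd h.symm hne
  set r : ℝ → ℝ := fun x => mInv m (a / σ x) with hrdef
  have hrspec : ∀ x, σ x ≠ a → 0 ≤ r x ∧ m (r x) = a / σ x ∧ f a x = ENNReal.ofReal (r x) := by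
    intro x hne
    obtain ⟨h1, h2⟩ := mInv_spec hm01 hmc hmmono hmlim (hrat_lb x) (hrat_lt1 x hne)
    refine ⟨h1, h2, ?_⟩
    obtain ⟨r', hr'0, hr'm, hr'f⟩ := (hf a ha0 ha1 x).2 hne
    have : r x = r' := by
      rw [hrdef]
      simp only
      rw [← hr'm, mInv_m hm01 hmc hmmono hmlim hr'0]
    rw [this]; exact hr'f
  have hftop : ∀ x, σ x = a → f a x = ⊤ := fun x hx => (hf a ha0 ha1 x).1 hx
  -- measurability of f a
  set E : ℝ → ENNReal := fun t => if t < 1 then ENNReal.ofReal (mInv m t) else ⊤ with hEdef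
  have hEmono : Monotone E := by
    intro t₁ t₂ h12
    by_cases h2 : t₂ < 1
    · have h1 : t₁ < 1 := lt_of_le_of_lt h12 h2
      simp only [hEdef, if_pos h1, if_pos h2]
      apply ENNReal.ofReal_le_ofReal
      by_cases hc2 : t₂ ≤ m 0
      · rw [mInv_of_le (le_trans h12 hc2), mInv_of_le hc2]
      · push_neg at hc2
        by_cases hc1 : t₁ ≤ m 0
        · rw [mInv_of_le hc1]
          exact (mInv_spec hm01 hmc hmmono hmlim hc2.le h2).1
        · push_neg at hc1
          exact mInv_mono hm01 hmc hmmono hmlim hc1.le h12 h2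
    · simp only [hEdef, if_neg h2]
      exact le_top
  have hfeq : f a = fun x => E (a / σ x) := by
    funext x
    by_cases hx : σ x = a
    · have h1 : a / σ x = 1 := by rw [hx]; exact div_self (ne_of_gt hapos)
      simp only [hEdef, h1]
      rw [if_neg (lt_irrefl (1:ℝ))]
      exact hftop x hx
    · obtain ⟨h1, h2, h3⟩ := hrspec x hx
      simp only [hEdef, if_pos (hrat_lt1 x hx)]
      exact h3
  have hfmeas : Measurable (f a) := by
    rw [hfeq]
    exact hEmono.measurable.comp ((continuous_const.div hσc
      (fun x => ne_of_gt (hσpos x))).measurable)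
  have hFtop : (∫⁻ z in Set.Ioc (0:ℝ) 1, f a z) ≠ ⊤ := hFa.ne_top
  have hPpos : 0 < |P| := by
    have := lt_of_le_of_lt zero_le hFa
    exact ENNReal.ofReal_pos.mp this
  set s : ℝ := if 0 < P then 1 else -1 with hsdef
  have hsP : s * |P| = P := by
    rcases abs_cases P with ⟨h1, h2⟩ | ⟨h1, h2⟩
    · rw [hsdef, if_pos (by linarith [hPpos] : 0 < P), h1, one_mul]
    · rw [hsdef, if_neg (by linarith : ¬ 0 < P), h1]; ring
  have hsabs : ∀ t : ℝ, 0 ≤ t → |s * t| = t := by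
    intro t ht
    rw [abs_mul]
    rcases le_or_gt P 0 with h | h
    · rw [hsdef, if_neg (not_lt.mpr h)]; simp [abs_of_nonneg ht]
    · rw [hsdef, if_pos h]; simp [abs_of_nonneg ht]
  set F := ∫⁻ z in Set.Ioc (0:ℝ) 1, f a z with hFdef
  set η : ℝ := (|P| - F.toReal) / 2 with hηdef
  have hηpos : 0 < η := by
    have : F.toReal < |P| := by
      rw [ENNReal.lt_ofReal_iff_toReal_lt hFtop] at hFa
      exact hFa
    rw [hηdef]; linarith
  set A : ℝ := (K : ℝ) + |P| + 1 with hAdef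
  have hApos : 0 < A := by positivity
  -- find κ
  have hZnull : (volume.restrict (Set.Ioc (0:ℝ) 1)) {x | σ x = a} = 0 := by
    have hae : ∀ᵐ x ∂(volume.restrict (Set.Ioc (0:ℝ) 1)), f a x < ⊤ :=
      ae_lt_top hfmeas hFtop
    have hsubset : {x | σ x = a} ⊆ {x | ¬ f a x < ⊤} := by
      intro x hx
      simp only [mem_setOf_eq, not_lt, top_le_iff]
      exact hftop x hx
    exact measure_mono_null hsubset hae
  set S : ℕ → Set ℝ := fun n => Set.Ioc (0:ℝ) 1 ∩ {x | σ x ≤ a + 1/(n+1)} with hSdef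
  have hSmeas : ∀ n, MeasurableSet (S n) := by
    intro n
    exact measurableSet_Ioc.inter (hσc.measurable measurableSet_Iic)
  have hSanti : Antitone S := by
    intro n k hnk
    apply inter_subset_inter_right
    intro x hx
    simp only [mem_setOf_eq] at hx ⊢
    have h1 : (1:ℝ)/(k+1) ≤ 1/(n+1) := by
      apply one_div_le_one_div_of_le
      · positivity
      · have : (n:ℝ) ≤ k := Nat.cast_le.mpr hnk
        linarith
    linarith
  have hSiInter : volume (⋂ n, S n) = 0 := by
    have h1 : (⋂ n, S n) ⊆ Set.Ioc (0:ℝ) 1 ∩ {x | σ x = a} := by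
      intro x hx
      simp only [mem_iInter, hSdef, mem_inter_iff, mem_setOf_eq] at hx
      obtain ⟨hx1, -⟩ := hx 0
      refine ⟨hx1, ?_⟩
      have h2 : σ x ≤ a := by
        by_contra hcon; push_neg at hcon
        obtain ⟨n, hn⟩ := exists_nat_one_div_lt (by linarith : 0 < σ x - a)
        have := (hx n).2
        linarith
      exact le_antisymm h2 (le_trans ha1 (hσle x))
    apply measure_mono_null h1
    rw [inter_comm, ← Measure.restrict_apply₀' measurableSet_Ioc.nullMeasurableSet]
    exact hZnull
  have htend : Tendsto (fun n => volume (S n)) atTop (nhds 0) := by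
    have := tendsto_measure_iInter_atTop (μ := volume)
      (fun n => (hSmeas n).nullMeasurableSet) hSanti
      ⟨0, by
        apply ne_of_lt
        apply lt_of_le_of_lt (measure_mono (inter_subset_left))
        rw [Real.volume_Ioc]
        exact ENNReal.ofReal_lt_top⟩
    rw [hSiInter] at this
    exact this
  have hηA : (0:ENNReal) < ENNReal.ofReal (η / A) := by
    rw [ENNReal.ofReal_pos]; positivity
  obtain ⟨n₀, hn₀⟩ := (htend.eventually_lt_const hηA).exists
  set κ : ℝ := 1/(n₀+1) with hκdef
  have hκpos : 0 < κ := by positivity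
  -- choose M
  have hrlt : a / (a + κ/2) < 1 := by
    rw [div_lt_one (by linarith)]; linarith
  obtain ⟨M, hM⟩ := ((hmlim.eventually (eventually_gt_nhds hrlt)).and
    (eventually_ge_atTop (0:ℝ))).exists
  obtain ⟨hMgt, hM0⟩ := hM
  have hmM1 : m M < 1 := (hm01 M hM0).2
  -- define b
  set b : ℝ → ℝ := fun x => mInv m (min (a / σ x) (m M)) with hbdef
  have hinner_mem : ∀ x, min (a / σ x) (m M) ∈ Icc (m 0) (m M) := by
    intro x
    constructor
    · exact le_min (hrat_lb x) ((hmmono.monotoneOn) self_mem_Ici (mem_Ici.mpr hM0) hM0)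
    · exact min_le_right _ _
  have hbcont : Continuous b := by
    apply ContinuousOn.comp_continuous
      (mInv_continuousOn hm01 hmc hmmono hmlim hM0)
      (Continuous.min (continuous_const.div hσc (fun x => ne_of_gt (hσpos x)))
        continuous_const)
    exact hinner_mem
  have hbspec : ∀ x, 0 ≤ b x ∧ m (b x) = min (a / σ x) (m M) := fun x =>
    mInv_spec hm01 hmc hmmono hmlim (hinner_mem x).1
      (lt_of_le_of_lt (hinner_mem x).2 hmM1)
  have hb0 : ∀ x, 0 ≤ b x := fun x => (hbspec x).1
  have hbper : ∀ (x : ℝ) (z : ℤ), b (x + z) = b x := by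
    intro x z
    simp only [hbdef, hσp x z]
  have hbf : ∀ x, ENNReal.ofReal (b x) ≤ f a x := by
    intro x
    by_cases hx : σ x = a
    · rw [hftop x hx]; exact le_top
    · obtain ⟨h1, h2, h3⟩ := hrspec x hx
      rw [h3]
      apply ENNReal.ofReal_le_ofReal
      rw [hbdef]
      simp only
      have := mInv_mono hm01 hmc hmmono hmlim (hinner_mem x).1
        (min_le_left (a / σ x) (m M)) (hrat_lt1 x hx)
      exact this
  -- define χ
  set χ : ℝ → ℝ := fun x => max 0 (min 1 ((a + κ - σ x) * (2/κ))) with hχdef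
  have hχcont : Continuous χ :=
    continuous_const.max (continuous_const.min
      ((continuous_const.sub hσc).mul continuous_const))
  have hχ01 : ∀ x, 0 ≤ χ x ∧ χ x ≤ 1 := by
    intro x
    exact ⟨le_max_left _ _, max_le (by norm_num) (min_le_left _ _)⟩
  have hχper : ∀ (x : ℝ) (z : ℤ), χ (x + z) = χ x := by
    intro x z
    simp only [hχdef, hσp x z]
  have hχ1 : ∀ x, σ x < a + κ/2 → χ x = 1 := by
    intro x hx
    have h2 : (κ/2) * (2/κ) = 1 := by field_simp
    have h1 : (1:ℝ) ≤ (a + κ - σ x) * (2/κ) := by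
      rw [← h2]
      apply mul_le_mul_of_nonneg_right (by linarith) (by positivity)
    simp only [hχdef, min_eq_left h1, max_eq_right (by norm_num : (0:ℝ) ≤ 1)]
  have hχ0 : ∀ x, a + κ < σ x → χ x = 0 := by
    intro x hx
    have h1 : (a + κ - σ x) * (2/κ) ≤ 0 := by
      apply mul_nonpos_of_nonpos_of_nonneg (by linarith) (by positivity)
    have h2 : min 1 ((a + κ - σ x) * (2/κ)) ≤ 0 := le_trans (min_le_right _ _) h1
    simp only [hχdef, max_eq_left h2]
  -- integrals
  set Ib : ℝ := ∫ x in (0:ℝ)..1, b x with hIbdef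
  set Iχ : ℝ := ∫ x in (0:ℝ)..1, χ x with hIχdef
  have hint_b : ∀ t₁ t₂ : ℝ, IntervalIntegrable b MeasureSpace.volume t₁ t₂ :=
    fun t₁ t₂ => hbcont.intervalIntegrable t₁ t₂
  have hint_χ : ∀ t₁ t₂ : ℝ, IntervalIntegrable χ MeasureSpace.volume t₁ t₂ :=
    fun t₁ t₂ => hχcont.intervalIntegrable t₁ t₂
  have hIb_le : Ib ≤ F.toReal := by
    have h1 : Ib = ∫ x in Set.Ioc (0:ℝ) 1, b x := intervalIntegral.integral_of_le zero_le_one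
    have h2 : ENNReal.ofReal Ib = ∫⁻ x in Set.Ioc (0:ℝ) 1, ENNReal.ofReal (b x) := by
      rw [h1]
      exact ofReal_integral_eq_lintegral_ofReal
        hbcont.integrableOn_Ioc (ae_of_all _ hb0)
    have h3 : (∫⁻ x in Set.Ioc (0:ℝ) 1, ENNReal.ofReal (b x)) ≤ F :=
      lintegral_mono fun x => hbf x
    rw [← ENNReal.ofReal_le_iff_le_toReal hFtop]
    rw [h2]
    exact h3
  have hIχ0 : 0 ≤ Iχ := by
    rw [hIχdef]
    apply intervalIntegral.integral_nonneg zero_le_one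
    intro x _; exact (hχ01 x).1
  have hIχ_le : Iχ ≤ η / A := by
    set T : Set ℝ := {x | σ x ≤ a + κ} with hTdef
    have hTmeas : MeasurableSet T := hσc.measurable measurableSet_Iic
    have h1 : Iχ = ∫ x in Set.Ioc (0:ℝ) 1, χ x := intervalIntegral.integral_of_le zero_le_one
    have h2 : ∫ x in Set.Ioc (0:ℝ) 1, χ x ≤ ∫ x in Set.Ioc (0:ℝ) 1, T.indicator (fun _ => (1:ℝ)) x := by
      apply setIntegral_mono_on
      · exact (hχcont.integrableOn_Ioc)
      · apply Integrable.indicator _ hTmeas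
        exact (integrableOn_const_iff).mpr (Or.inr (by rw [Real.volume_Ioc]; exact ENNReal.ofReal_lt_top))
      · exact measurableSet_Ioc
      · intro x _
        by_cases hx : σ x ≤ a + κ
        · rw [indicator_of_mem (by exact hx : x ∈ T)]
          exact (hχ01 x).2
        · push_neg at hx
          rw [indicator_of_notMem (by simpa [hTdef] using not_le.mpr hx : x ∉ T)]
          rw [hχ0 x hx]
    have h3 : ∫ x in Set.Ioc (0:ℝ) 1, T.indicator (fun _ => (1:ℝ)) x
        = (volume (Set.Ioc (0:ℝ) 1 ∩ T)).toReal := by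
      rw [setIntegral_indicator hTmeas, setIntegral_const, smul_eq_mul, mul_one, measureReal_def]
    have h4 : volume (Set.Ioc (0:ℝ) 1 ∩ T) ≤ ENNReal.ofReal (η / A) := by
      apply le_of_lt
      apply lt_of_le_of_lt _ hn₀
      apply measure_mono
      exact fun x hx => ⟨hx.1, hx.2⟩
    have h5 : (volume (Set.Ioc (0:ℝ) 1 ∩ T)).toReal ≤ η / A :=
      ENNReal.toReal_le_of_le_ofReal (by positivity) h4
    linarith
  set δ : ℝ := |P| - Ib - A * Iχ with hδdef
  have hδpos : 0 < δ := by
    have h1 : A * Iχ ≤ η := by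
      have := mul_le_mul_of_nonneg_left hIχ_le hApos.le
      rwa [mul_div_cancel₀ η (ne_of_gt hApos)] at this
    have h2 : F.toReal = |P| - 2 * η := by rw [hηdef]; ring
    rw [hδdef]
    have := hIb_le
    rw [h2] at this
    linarith
  -- define g and the test function
  set g : ℝ → ℝ := fun x => b x + δ + A * χ x with hgdef
  have hgcont : Continuous g := (hbcont.add continuous_const).add
    (continuous_const.mul hχcont)
  have hgper : Function.Periodic g 1 := by
    intro x
    have h1 := hbper x 1
    have h2 := hχper x 1
    simp only [Int.cast_one] at h1 h2
    simp only [hgdef, h1, h2]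
  have hgpos : ∀ x, 0 < g x := by
    intro x
    have := hb0 x
    have := (hχ01 x).1
    have : 0 ≤ A * χ x := mul_nonneg hApos.le (hχ01 x).1
    simp only [hgdef]
    linarith [hb0 x]
  have hIg : ∫ x in (0:ℝ)..1, g x = |P| := by
    have h1 : IntervalIntegrable (fun x => b x + δ) MeasureSpace.volume 0 1 :=
      (hint_b 0 1).add intervalIntegrable_const
    have h2 : IntervalIntegrable (fun x => A * χ x) MeasureSpace.volume 0 1 :=
      (hint_χ 0 1).const_mul A
    simp only [hgdef]
    rw [intervalIntegral.integral_add h1 h2,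
      intervalIntegral.integral_add (hint_b 0 1) intervalIntegrable_const,
      intervalIntegral.integral_const, intervalIntegral.integral_const_mul]
    simp only [sub_zero, one_smul]
    rw [hδdef]; ring
  set ψ : ℝ → ℝ := fun x => s * g x - P with hψdef
  have hψcont : Continuous ψ := (continuous_const.mul hgcont).sub continuous_const
  have hψper : Function.Periodic ψ 1 := by
    intro x
    simp only [hψdef, hgper x]
  have hψ0 : ∫ t in (0:ℝ)..1, ψ t = 0 := by
    simp only [hψdef]
    rw [intervalIntegral.integral_sub ((hgcont.intervalIntegrable 0 1).const_mul s)
      intervalIntegrable_const,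
      intervalIntegral.integral_const_mul, hIg, hsP, intervalIntegral.integral_const]
    simp
  obtain ⟨hΦC, hΦper, hΦderiv, hΦsub⟩ := buildTest ψ hψcont hψper hψ0
  set Φ : ℝ → ℝ := fun x => ∫ t in (0:ℝ)..x, ψ t with hΦdef
  have hu : Continuous u := hK.continuous
  obtain ⟨xh, hxh⟩ := exists_global_max_s16 (w := fun y => u y - Φ y)
    (hu.sub hΦC.continuous) (fun x z => by simp only [hup x z, hΦper x z])
  have hmem : ψ xh ∈ superDiff1 u xh := ⟨Φ, hΦC, hΦper, hxh, (hΦderiv xh).symm⟩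
  have hkey : σ xh * m |ψ xh + P| ≤ c := hsub xh (ψ xh) hmem
  have hψP : ψ xh + P = s * g xh := by simp only [hψdef]; ring
  have habs : |ψ xh + P| = g xh := by rw [hψP]; exact hsabs _ (hgpos xh).le
  have hkey' : σ xh * m (g xh) ≤ a := by
    rw [habs] at hkey
    exact le_trans hkey hca
  by_cases hW : σ xh < a + κ/2
  · -- steepness: max cannot be in W
    have hWopen : IsOpen {x | σ x < a + κ/2} := isOpen_lt hσc continuous_const
    obtain ⟨ε, hεpos, hball⟩ := Metric.isOpen_iff.mp hWopen xh hW
    have hgA : ∀ y, dist y xh < ε → A ≤ g y := by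
      intro y hy
      have hy' : σ y < a + κ/2 := hball hy
      have h1 : χ y = 1 := hχ1 y hy'
      simp only [hgdef, h1, mul_one]
      linarith [hb0 y, hδpos]
    have hs_cases : s = 1 ∨ s = -1 := by
      rw [hsdef]; by_cases h : 0 < P
      · left; rw [if_pos h]
      · right; rw [if_neg h]
    rcases hs_cases with hs1 | hs1
    · -- P > 0 case
      have hP : P = |P| := by nth_rewrite 1 [← hsP]; rw [hs1, one_mul]
      set x' : ℝ := xh - ε/2 with hx'def
      have hΦdiff : Φ xh - Φ x' = ∫ t in x'..xh, ψ t := hΦsub x' xh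
      have hlow : ∀ t ∈ Icc x' xh, (K:ℝ) + 1 ≤ ψ t := by
        intro t ht
        have hd : dist t xh < ε := by
          rw [Real.dist_eq, abs_sub_lt_iff]
          obtain ⟨h1, h2⟩ := ht
          rw [hx'def] at h1
          constructor <;> linarith
        have := hgA t hd
        simp only [hψdef, hs1, one_mul]
        linarith [this, hP, hAdef]
      have hintlow : ((K:ℝ)+1) * (ε/2) ≤ ∫ t in x'..xh, ψ t := by
        have h1 : ∫ t in x'..xh, ((K:ℝ)+1) = ((K:ℝ)+1) * (ε/2) := by
          rw [intervalIntegral.integral_const]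
          rw [hx'def]; ring_nf
        rw [← h1]
        apply intervalIntegral.integral_mono_on (by rw [hx'def]; linarith)
          intervalIntegrable_const (hψcont.intervalIntegrable x' xh) hlow
      have hLip : u xh - u x' ≤ (K:ℝ) * (ε/2) := by
        have h1 := hK.dist_le_mul xh x'
        rw [Real.dist_eq, Real.dist_eq] at h1
        have h2 : |xh - x'| = ε/2 := by rw [hx'def]; rw [abs_of_nonneg (by linarith)]; ring
        rw [h2] at h1
        calc u xh - u x' ≤ |u xh - u x'| := le_abs_self _
          _ ≤ (K:ℝ) * (ε/2) := h1
      have hmax' := hxh x'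
      have hexp : ((K:ℝ)+1)*(ε/2) = (K:ℝ)*(ε/2) + ε/2 := by ring
      linarith [hΦdiff, hintlow, hexp, hεpos]
    · -- P < 0 case
      have hP : P = -|P| := by nth_rewrite 1 [← hsP]; rw [hs1]; ring
      set x'' : ℝ := xh + ε/2 with hx''def
      have hΦdiff : Φ x'' - Φ xh = ∫ t in xh..x'', ψ t := hΦsub xh x''
      have hhigh : ∀ t ∈ Icc xh x'', ψ t ≤ -((K:ℝ) + 1) := by
        intro t ht
        have hd : dist t xh < ε := by
          rw [Real.dist_eq, abs_sub_lt_iff]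
          obtain ⟨h1, h2⟩ := ht
          rw [hx''def] at h2
          constructor <;> linarith
        have := hgA t hd
        simp only [hψdef, hs1, neg_one_mul]
        linarith [this, hP, hAdef]
      have hinthigh : (∫ t in xh..x'', ψ t) ≤ -((K:ℝ)+1) * (ε/2) := by
        have h1 : ∫ t in xh..x'', (-((K:ℝ)+1)) = -((K:ℝ)+1) * (ε/2) := by
          rw [intervalIntegral.integral_const]
          rw [hx''def]; ring_nf
        rw [← h1]
        apply intervalIntegral.integral_mono_on (by rw [hx''def]; linarith)
          (hψcont.intervalIntegrable xh x'') intervalIntegrable_const hhigh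
      have hLip : -((K:ℝ) * (ε/2)) ≤ u x'' - u xh := by
        have h1 := hK.dist_le_mul x'' xh
        rw [Real.dist_eq, Real.dist_eq] at h1
        have h2 : |x'' - xh| = ε/2 := by rw [hx''def]; rw [abs_of_nonneg (by linarith)]; ring
        rw [h2] at h1
        have := neg_abs_le (u x'' - u xh)
        linarith
      have hmax' := hxh x''
      have hexp : -((K:ℝ)+1)*(ε/2) = -((K:ℝ)*(ε/2)) - ε/2 := by ring
      linarith [hΦdiff, hinthigh, hmax', hLip, hεpos, hexp]
  · push_neg at hW
    have hne : σ xh ≠ a := by intro h; rw [h] at hW; linarith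
    obtain ⟨hr0, hrm, hrf⟩ := hrspec xh hne
    have hg0 : 0 ≤ g xh := (hgpos xh).le
    by_cases hcase : a / σ xh ≤ m M
    · have hbx : b xh = r xh := by
        simp only [hbdef, hrdef, min_eq_left hcase]
      have h1 : r xh < g xh := by
        have h2 : 0 ≤ A * χ xh := mul_nonneg hApos.le (hχ01 xh).1
        have h3 : g xh = b xh + δ + A * χ xh := rfl
        rw [hbx] at h3
        linarith [h3]
      have h2 : m (r xh) < m (g xh) :=
        hmmono (mem_Ici.mpr hr0) (mem_Ici.mpr hg0) h1
      have h3 : a / σ xh < m (g xh) := by rw [← hrm]; exact h2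
      have h4 : a < σ xh * m (g xh) := by
        rw [div_lt_iff₀ (hσpos xh)] at h3
        linarith [h3]
      linarith
    · push_neg at hcase
      have hbx : b xh = M := by
        simp only [hbdef, min_eq_right hcase.le]
        exact mInv_m hm01 hmc hmmono hmlim hM0
      have hgM : M ≤ g xh := by
        have h2 : 0 ≤ A * χ xh := mul_nonneg hApos.le (hχ01 xh).1
        have h3 : g xh = b xh + δ + A * χ xh := rfl
        rw [hbx] at h3
        linarith [h3]
      have h2 : m M ≤ m (g xh) :=
        (hmmono.monotoneOn) (mem_Ici.mpr hM0) (mem_Ici.mpr hg0) hgM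
      have h3 : a < (a + κ/2) * m M := by
        rw [div_lt_iff₀ (by linarith : (0:ℝ) < a + κ/2)] at hMgt
        linarith
      have h4 : (a + κ/2) * m M ≤ σ xh * m (g xh) := by
        have hm0' : 0 ≤ m M := (hm01 M hM0).1.le
        have hmg' : 0 ≤ m (g xh) := (hm01 _ hg0).1.le
        calc (a + κ/2) * m M ≤ σ xh * m M :=
              mul_le_mul_of_nonneg_right hW hm0'
          _ ≤ σ xh * m (g xh) := mul_le_mul_of_nonneg_left h2 (hσpos xh).le
      linarith

lemma supersol_push
    (σ m : ℝ → ℝ)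
    (hσc : Continuous σ) (hσp : IsZPeriodic1 σ) (hσpos : ∀ x, 0 < σ x)
    (hm01 : ∀ r : ℝ, 0 ≤ r → 0 < m r ∧ m r < 1)
    (hmc : ContinuousOn m (Set.Ici 0))
    (hmmono : StrictMonoOn m (Set.Ici 0))
    (hmlim : Tendsto m atTop (nhds 1))
    (σmax σmin : ℝ)
    (hσmax : IsGreatest (Set.range σ) σmax) (hσmin : IsLeast (Set.range σ) σmin)
    (f : ℝ → ℝ → ENNReal)
    (hf : ∀ a : ℝ, σmax * m 0 ≤ a → a ≤ σmin → ∀ x : ℝ,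
        (σ x = a → f a x = ⊤) ∧
        (σ x ≠ a → ∃ r : ℝ, 0 ≤ r ∧ m r = a / σ x ∧ f a x = ENNReal.ofReal r))
    (a : ℝ) (ha0 : σmax * m 0 < a) (ha1 : a ≤ σmin)
    (Q c : ℝ) (v : ℝ → ℝ) (hv : Continuous v) (hvp : IsZPeriodic1 v)
    (hsup : IsCellSupersolution1 (fun x p => σ x * m |p|) Q c v)
    (hac : a ≤ c)
    (hFa : ENNReal.ofReal |Q| < ∫⁻ z in Set.Ioc (0:ℝ) 1, f a z) : False := by
  have hσle : ∀ x, σmin ≤ σ x := fun x => hσmin.2 (mem_range_self x)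
  have hσge : ∀ x, σ x ≤ σmax := fun x => hσmax.2 (mem_range_self x)
  obtain ⟨y₁, hy₁⟩ := hσmax.1
  have hσmaxpos : 0 < σmax := hy₁ ▸ hσpos y₁
  have hm0pos : 0 < m 0 := (hm01 0 le_rfl).1
  have hapos : 0 < a := lt_trans (mul_pos hσmaxpos hm0pos) ha0
  have hrat_lb : ∀ x, m 0 ≤ a / σ x := by
    intro x
    rw [le_div_iff₀ (hσpos x)]
    nlinarith [hσge x, hm0pos, ha0]
  have hrat_lbs : ∀ x, m 0 < a / σ x := by
    intro x
    rw [lt_div_iff₀ (hσpos x)]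
    nlinarith [hσge x, hm0pos, ha0]
  have hrat_lt1 : ∀ x, σ x ≠ a → a / σ x < 1 := by
    intro x hne
    rw [div_lt_one (hσpos x)]
    rcases lt_or_eq_of_le (le_trans ha1 (hσle x)) with h | h
    · exact h
    · exact absurd h.symm hne
  set r : ℝ → ℝ := fun x => mInv m (a / σ x) with hrdef
  have hrspec : ∀ x, σ x ≠ a → 0 ≤ r x ∧ m (r x) = a / σ x ∧ f a x = ENNReal.ofReal (r x) := by
    intro x hne
    obtain ⟨h1, h2⟩ := mInv_spec hm01 hmc hmmono hmlim (hrat_lb x) (hrat_lt1 x hne)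
    refine ⟨h1, h2, ?_⟩
    obtain ⟨r', hr'0, hr'm, hr'f⟩ := (hf a ha0.le ha1 x).2 hne
    have : r x = r' := by
      rw [hrdef]
      simp only
      rw [← hr'm, mInv_m hm01 hmc hmmono hmlim hr'0]
    rw [this]; exact hr'f
  have hftop : ∀ x, σ x = a → f a x = ⊤ := fun x hx => (hf a ha0.le ha1 x).1 hx
  set E : ℝ → ENNReal := fun t => if t < 1 then ENNReal.ofReal (mInv m t) else ⊤ with hEdef
  have hEmono : Monotone E := by
    intro t₁ t₂ h12
    by_cases h2 : t₂ < 1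
    · have h1 : t₁ < 1 := lt_of_le_of_lt h12 h2
      simp only [hEdef, if_pos h1, if_pos h2]
      apply ENNReal.ofReal_le_ofReal
      by_cases hc2 : t₂ ≤ m 0
      · rw [mInv_of_le (le_trans h12 hc2), mInv_of_le hc2]
      · push_neg at hc2
        by_cases hc1 : t₁ ≤ m 0
        · rw [mInv_of_le hc1]
          exact (mInv_spec hm01 hmc hmmono hmlim hc2.le h2).1
        · push_neg at hc1
          exact mInv_mono hm01 hmc hmmono hmlim hc1.le h12 h2
    · simp only [hEdef, if_neg h2]
      exact le_top
  have hfeq : f a = fun x => E (a / σ x) := by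
    funext x
    by_cases hx : σ x = a
    · have h1 : a / σ x = 1 := by rw [hx]; exact div_self (ne_of_gt hapos)
      simp only [hEdef, h1]
      rw [if_neg (lt_irrefl (1:ℝ))]
      exact hftop x hx
    · obtain ⟨h1, h2, h3⟩ := hrspec x hx
      simp only [hEdef, if_pos (hrat_lt1 x hx)]
      exact h3
  have hfmeas : Measurable (f a) := by
    rw [hfeq]
    exact hEmono.measurable.comp ((continuous_const.div hσc
      (fun x => ne_of_gt (hσpos x))).measurable)
  -- monotone convergence to find truncation level
  have hMC : (∫⁻ z in Set.Ioc (0:ℝ) 1, f a z)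
      = ⨆ n : ℕ, ∫⁻ z in Set.Ioc (0:ℝ) 1, min (f a z) n := by
    rw [← lintegral_iSup (fun n => hfmeas.min measurable_const)]
    · congr 1
      funext z
      apply le_antisymm
      · rcases eq_or_ne (f a z) ⊤ with h | h
        · rw [h]
          apply le_of_forall_lt
          intro w hw
          obtain ⟨n, hn⟩ := ENNReal.exists_nat_gt hw.ne_top
          apply lt_of_lt_of_le hn
          apply le_iSup_of_le n
          simp [h]
        · obtain ⟨n, hn⟩ := ENNReal.exists_nat_gt h
          apply le_iSup_of_le n
          rw [min_eq_left hn.le]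
      · exact iSup_le fun n => min_le_left _ _
    · intro n k hnk z
      exact min_le_min le_rfl (by exact_mod_cast Nat.cast_le.mpr hnk)
  rw [hMC, lt_iSup_iff] at hFa
  obtain ⟨n, hn⟩ := hFa
  set Mr : ℝ := (n : ℝ) + 1 with hMrdef
  have hMr0 : 0 ≤ Mr := by positivity
  have hMrpos : 0 < Mr := by positivity
  have hmMr1 : m Mr < 1 := (hm01 Mr hMr0).2
  have hnle : (n : ENNReal) ≤ ENNReal.ofReal Mr := by
    rw [hMrdef]
    rw [← ENNReal.ofReal_natCast n]
    exact ENNReal.ofReal_le_ofReal (by linarith)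
  have hn' : ENNReal.ofReal |Q| < ∫⁻ z in Set.Ioc (0:ℝ) 1, min (f a z) (ENNReal.ofReal Mr) :=
    lt_of_lt_of_le hn (lintegral_mono fun z => min_le_min le_rfl hnle)
  -- truncated profile
  set b : ℝ → ℝ := fun x => mInv m (min (a / σ x) (m Mr)) with hbdef
  have hinner_mem : ∀ x, min (a / σ x) (m Mr) ∈ Icc (m 0) (m Mr) := by
    intro x
    constructor
    · exact le_min (hrat_lb x) ((hmmono.monotoneOn) self_mem_Ici (mem_Ici.mpr hMr0) hMr0)
    · exact min_le_right _ _
  have hbcont : Continuous b := by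
    apply ContinuousOn.comp_continuous
      (mInv_continuousOn hm01 hmc hmmono hmlim hMr0)
      (Continuous.min (continuous_const.div hσc (fun x => ne_of_gt (hσpos x)))
        continuous_const)
    exact hinner_mem
  have hbspec : ∀ x, 0 ≤ b x ∧ m (b x) = min (a / σ x) (m Mr) := fun x =>
    mInv_spec hm01 hmc hmmono hmlim (hinner_mem x).1
      (lt_of_le_of_lt (hinner_mem x).2 hmMr1)
  have hb0 : ∀ x, 0 ≤ b x := fun x => (hbspec x).1
  have hbper : ∀ (x : ℝ) (z : ℤ), b (x + z) = b x := by
    intro x z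
    simp only [hbdef, hσp x z]
  have hofb : ∀ x, ENNReal.ofReal (b x) = min (f a x) (ENNReal.ofReal Mr) := by
    intro x
    by_cases hx : σ x = a
    · have h1 : a / σ x = 1 := by rw [hx]; exact div_self (ne_of_gt hapos)
      have h2 : min (a / σ x) (m Mr) = m Mr := min_eq_right (by rw [h1]; exact hmMr1.le)
      have h3 : b x = Mr := by
        simp only [hbdef, h2]
        exact mInv_m hm01 hmc hmmono hmlim hMr0
      rw [h3, hftop x hx]
      rw [min_eq_right le_top]
    · obtain ⟨hr0, hrm, hrf⟩ := hrspec x hx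
      rw [hrf]
      by_cases hcase : a / σ x ≤ m Mr
      · have hbx : b x = r x := by simp only [hbdef, hrdef, min_eq_left hcase]
        have hrMr : r x ≤ Mr := by
          by_contra hcon; push_neg at hcon
          have := hmmono (mem_Ici.mpr hMr0) (mem_Ici.mpr hr0) hcon
          rw [hrm] at this
          linarith
        rw [hbx, min_eq_left (ENNReal.ofReal_le_ofReal hrMr)]
      · push_neg at hcase
        have hbx : b x = Mr := by
          simp only [hbdef, min_eq_right hcase.le]
          exact mInv_m hm01 hmc hmmono hmlim hMr0
        have hrMr : Mr ≤ r x := by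
          by_contra hcon; push_neg at hcon
          have := hmmono (mem_Ici.mpr hr0) (mem_Ici.mpr hMr0) hcon
          rw [hrm] at this
          linarith
        rw [hbx, min_eq_right (ENNReal.ofReal_le_ofReal hrMr)]
  set Ib : ℝ := ∫ x in (0:ℝ)..1, b x with hIbdef
  have hIb_eq : ENNReal.ofReal Ib = ∫⁻ z in Set.Ioc (0:ℝ) 1, min (f a z) (ENNReal.ofReal Mr) := by
    rw [hIbdef, intervalIntegral.integral_of_le zero_le_one]
    rw [ofReal_integral_eq_lintegral_ofReal hbcont.integrableOn_Ioc (ae_of_all _ hb0)]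
    congr 1
    funext z
    exact hofb z
  have hIbQ : |Q| < Ib := by
    have h1 : ENNReal.ofReal |Q| < ENNReal.ofReal Ib := by rw [hIb_eq]; exact hn'
    by_contra hcon; push_neg at hcon
    exact absurd (ENNReal.ofReal_le_ofReal hcon) (not_le.mpr h1)
  have hIbpos : 0 < Ib := lt_of_le_of_lt (abs_nonneg Q) hIbQ
  set c₀ : ℝ := |Q| / Ib with hc₀def
  have hc₀0 : 0 ≤ c₀ := div_nonneg (abs_nonneg Q) hIbpos.le
  have hc₀1 : c₀ < 1 := (div_lt_one hIbpos).mpr hIbQ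
  have hc₀Ib : c₀ * Ib = |Q| := div_mul_cancel₀ _ (ne_of_gt hIbpos)
  set sQ : ℝ := if 0 ≤ Q then 1 else -1 with hsQdef
  have hsQQ : sQ * |Q| = Q := by
    rcases abs_cases Q with ⟨h1, h2⟩ | ⟨h1, h2⟩
    · rw [hsQdef, if_pos h2, h1, one_mul]
    · rw [hsQdef, if_neg (by linarith : ¬ 0 ≤ Q), h1]; ring
  have hsQabs : ∀ t : ℝ, 0 ≤ t → |sQ * t| = t := by
    intro t ht
    rw [abs_mul]
    rcases le_or_gt 0 Q with h | h
    · rw [hsQdef, if_pos h]; simp [abs_of_nonneg ht]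
    · rw [hsQdef, if_neg (not_le.mpr h)]; simp [abs_of_nonneg ht]
  set ψ : ℝ → ℝ := fun x => sQ * (c₀ * b x) - Q with hψdef
  have hψcont : Continuous ψ :=
    (continuous_const.mul (continuous_const.mul hbcont)).sub continuous_const
  have hψper : Function.Periodic ψ 1 := by
    intro x
    have h1 := hbper x 1
    simp only [Int.cast_one] at h1
    simp only [hψdef, h1]
  have hψ0 : ∫ t in (0:ℝ)..1, ψ t = 0 := by
    simp only [hψdef]
    rw [intervalIntegral.integral_sub (f := fun t => sQ * (c₀ * b t)) (((continuous_const.mul (continuous_const.mul hbcont))).intervalIntegrable 0 1)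
      intervalIntegrable_const]
    have h1 : ∫ t in (0:ℝ)..1, sQ * (c₀ * b t) = sQ * c₀ * Ib := by
      have he : (fun t => sQ * (c₀ * b t)) = fun t => (sQ * c₀) * b t := by funext t; ring
      rw [he, intervalIntegral.integral_const_mul]
    rw [h1, intervalIntegral.integral_const]
    simp only [sub_zero, one_smul]
    rw [mul_assoc, hc₀Ib, hsQQ]
    ring
  obtain ⟨hΦC, hΦper, hΦderiv, hΦsub⟩ := buildTest ψ hψcont hψper hψ0
  set Φ : ℝ → ℝ := fun x => ∫ t in (0:ℝ)..x, ψ t with hΦdef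
  obtain ⟨xh, hxh⟩ := exists_global_min (w := fun y => v y - Φ y)
    (hv.sub hΦC.continuous) (fun x z => by simp only [hvp x z, hΦper x z])
  have hmem : ψ xh ∈ subDiff1 v xh := ⟨Φ, hΦC, hΦper, hxh, (hΦderiv xh).symm⟩
  have hkey : c ≤ σ xh * m |ψ xh + Q| := hsup xh (ψ xh) hmem
  have hψQ : ψ xh + Q = sQ * (c₀ * b xh) := by simp only [hψdef]; ring
  have habs : |ψ xh + Q| = c₀ * b xh := by
    rw [hψQ]; exact hsQabs _ (mul_nonneg hc₀0 (hb0 xh))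
  rw [habs] at hkey
  have hcb0 : 0 ≤ c₀ * b xh := mul_nonneg hc₀0 (hb0 xh)
  have hfinal : σ xh * m (c₀ * b xh) < a := by
    by_cases hx : σ xh = a
    · have h1 : m (c₀ * b xh) < 1 := (hm01 _ hcb0).2
      calc σ xh * m (c₀ * b xh) < σ xh * 1 := mul_lt_mul_of_pos_left h1 (hσpos xh)
        _ = a := by rw [mul_one, hx]
    · obtain ⟨hr0, hrm, hrf⟩ := hrspec xh hx
      have hrpos : 0 < r xh := by
        rcases lt_or_eq_of_le hr0 with h | h
        · exact h
        · exfalso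
          have h2 : m (r xh) = m 0 := by rw [← h]
          rw [hrm] at h2
          exact absurd h2.symm (ne_of_lt (hrat_lbs xh))
      have hlt : c₀ * b xh < r xh := by
        by_cases hcase : a / σ xh ≤ m Mr
        · have hbx : b xh = r xh := by simp only [hbdef, hrdef, min_eq_left hcase]
          rw [hbx]
          nlinarith
        · push_neg at hcase
          have hbx : b xh = Mr := by
            simp only [hbdef, min_eq_right hcase.le]
            exact mInv_m hm01 hmc hmmono hmlim hMr0
          have hrMr : Mr < r xh := by
            by_contra hcon; push_neg at hcon
            have h3 := (hmmono.monotoneOn) (mem_Ici.mpr hr0) (mem_Ici.mpr hMr0) hcon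
            rw [hrm] at h3
            linarith
          rw [hbx]
          nlinarith
      have h2 : m (c₀ * b xh) < m (r xh) :=
        hmmono (mem_Ici.mpr hcb0) (mem_Ici.mpr hr0) hlt
      rw [hrm] at h2
      calc σ xh * m (c₀ * b xh) < σ xh * (a / σ xh) :=
            mul_lt_mul_of_pos_left h2 (hσpos xh)
        _ = a := by
            have hne := ne_of_gt (hσpos xh)
            field_simp
  linarith [hkey, hac, hfinal]

/-- Strict monotonicity of the critical value in one dimension:
if `P, Q ∈ D` with `|P| > |Q| ≥ ∫₀¹ f_{σ̄ m₀}`, then `c(P) > c(Q)`. -/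
theorem onedim_critical_value_strict_mono
    (σ : ℝ → ℝ) (m : ℝ → ℝ)
    (hσc : Continuous σ) (hσp : IsZPeriodic1 σ) (hσpos : ∀ x, 0 < σ x)
    (hm01 : ∀ r : ℝ, 0 ≤ r → 0 < m r ∧ m r < 1)
    (hmLip : ∃ L : NNReal, LipschitzOnWith L m (Set.Ici 0))
    (hmmono : StrictMonoOn m (Set.Ici 0))
    (hmlim : Tendsto m atTop (nhds 1))
    (σmax σmin : ℝ)
    (hσmax : IsGreatest (Set.range σ) σmax) (hσmin : IsLeast (Set.range σ) σmin)
    (hcond : σmax * m 0 < σmin)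
    (f : ℝ → ℝ → ENNReal)
    (hf : ∀ a : ℝ, σmax * m 0 ≤ a → a ≤ σmin → ∀ x : ℝ,
        (σ x = a → f a x = ⊤) ∧
        (σ x ≠ a → ∃ r : ℝ, 0 ≤ r ∧ m r = a / σ x ∧ f a x = ENNReal.ofReal r))
    (P Q : ℝ) (u v : ℝ → ℝ) (cP cQ : ℝ)
    (hsolP : IsCellSolution1 (fun x p => σ x * m |p|) P u cP)
    (hsolQ : IsCellSolution1 (fun x p => σ x * m |p|) Q v cQ)
    (hPQ : |Q| < |P|)
    (hQ : ∫⁻ z in Set.Ioc (0:ℝ) 1, f (σmax * m 0) z ≤ ENNReal.ofReal |Q|) :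
    cQ < cP := by
  obtain ⟨⟨Ku, hKu⟩, hupP, hsubP, hsupP⟩ := hsolP
  obtain ⟨⟨Kv, hKv⟩, hvpQ, hsubQ, hsupQ⟩ := hsolQ
  obtain ⟨L, hLip⟩ := hmLip
  have hmc : ContinuousOn m (Set.Ici 0) := hLip.continuousOn
  by_contra hcon
  push_neg at hcon
  have hPQ' : ENNReal.ofReal |Q| < ENNReal.ofReal |P| :=
    (ENNReal.ofReal_lt_ofReal_iff (lt_of_le_of_lt (abs_nonneg Q) hPQ)).mpr hPQ
  by_cases hc1 : cP ≤ σmax * m 0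
  · exact subsol_push σ m hσc hσp hσpos hm01 hmc hmmono hmlim σmax σmin hσmax hσmin f hf
      (σmax * m 0) le_rfl hcond.le P cP u Ku hKu hupP hsubP hc1
      (lt_of_le_of_lt hQ hPQ')
  · push_neg at hc1
    have hcPmin : cP ≤ σmin := supersol_le_sigmamin σ m hσc hσp hσpos hm01 σmin hσmin.1
      P cP u hKu.continuous hupP hsupP
    set a₂ : ℝ := min cQ σmin with ha₂def
    have ha₂0 : σmax * m 0 < a₂ := lt_min (lt_of_lt_of_le hc1 hcon) hcond
    have ha₂1 : a₂ ≤ σmin := min_le_right _ _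
    have ha₂cQ : a₂ ≤ cQ := min_le_left _ _
    have hcPa₂ : cP ≤ a₂ := le_min hcon hcPmin
    have hBQ : (∫⁻ z in Set.Ioc (0:ℝ) 1, f a₂ z) ≤ ENNReal.ofReal |Q| := by
      by_contra hcon2
      push_neg at hcon2
      exact supersol_push σ m hσc hσp hσpos hm01 hmc hmmono hmlim σmax σmin hσmax hσmin f hf
        a₂ ha₂0 ha₂1 Q cQ v hKv.continuous hvpQ hsupQ ha₂cQ hcon2
    exact subsol_push σ m hσc hσp hσpos hm01 hmc hmmono hmlim σmax σmin hσmax hσmin f hf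
      a₂ ha₂0.le ha₂1 P cP u Ku hKu hupP hsubP hcPa₂ (lt_of_le_of_lt hBQ hPQ')
end
end
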